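/- arXiv:2506.02513 — 4 statements merged into one kernel-verified Lean document; each statement's English description precedes it below -/
import Mathlib

section
/- Let L = ∑_{j+|α|≤m} c_{jα} ∂_t^j ∂^α be a linear partial differential operator of order m on space-time ℝ×ℝⁿ with constant complex coefficients c_{jα}, not all top-order coefficients zero. If L is Lorentz invariant, i.e. Λ*Lu = LΛ*u for every Λ ∈ O(1,n) and every u ∈ C^∞(ℝ×ℝⁿ; ℂ), then there exist complex numbers b_0, …, b_{⌊m/2⌋} with b_{⌊m/2⌋} ≠ 0 such that L = ∑_{j=0}^{⌊m/2⌋} b_j □^j. -/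
open scoped BigOperators

open scoped ContDiff

noncomputable section

/-- Partial derivative in the `i`-th coordinate direction. -/
def pd {d : ℕ} (i : Fin d) (u : (Fin d → ℝ) → ℂ) : (Fin d → ℝ) → ℂ :=
  fun x => fderiv ℝ u x (Pi.single i 1)

/-- Iterated mixed partial derivative `∂^β` for a multi-index `β`. -/
def pdMulti {d : ℕ} (β : Fin d → ℕ) (u : (Fin d → ℝ) → ℂ) : (Fin d → ℝ) → ℂ :=
  (List.finRange d).foldr (fun i v => (pd i)^[β i] v) u

/-- The finite set of multi-indices (on `d` variables) of total degree at most `m`. -/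
def mIdx (d m : ℕ) : Finset (Fin d → ℕ) :=
  (Fintype.piFinset fun _ : Fin d => Finset.range (m + 1)).filter fun β => (∑ i, β i) ≤ m

/-- The linear partial differential operator `L = ∑_{|β| ≤ m} a_β ∂^β`. -/
def opApply {d : ℕ} (m : ℕ) (a : (Fin d → ℕ) → (Fin d → ℝ) → ℂ)
    (u : (Fin d → ℝ) → ℂ) : (Fin d → ℝ) → ℂ :=
  fun x => ∑ β ∈ mIdx d m, a β x * pdMulti β u x

/-- Smooth (`C^∞`) functions. -/
def SmoothFn {d : ℕ} (u : (Fin d → ℝ) → ℂ) : Prop := ContDiff ℝ (⊤ : ℕ∞) u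

/-- The Minkowski metric matrix `g = diag(1, -1, …, -1)` on `ℝ × ℝⁿ`. -/
def minkMatrix (n : ℕ) : Matrix (Fin (n + 1)) (Fin (n + 1)) ℝ :=
  Matrix.diagonal fun i => if i = 0 then 1 else -1

/-- Membership in the Lorentz group `O(1,n)`:  `ᵗΛ g Λ = g`. -/
def IsLorentz {n : ℕ} (Λ : Matrix (Fin (n + 1)) (Fin (n + 1)) ℝ) : Prop :=
  Λ.transpose * minkMatrix n * Λ = minkMatrix n

/-- The d'Alembertian `□ = ∂_t² - ∂₁² - ⋯ - ∂ₙ²` on space-time `ℝ × ℝⁿ`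
(coordinate `0` is time). -/
def dAlem {n : ℕ} (u : (Fin (n + 1) → ℝ) → ℂ) : (Fin (n + 1) → ℝ) → ℂ :=
  fun x => pd 0 (pd 0 u) x - ∑ j : Fin n, pd j.succ (pd j.succ u) x

/-- `L` is translation invariant: `T_y^* L u = L T_y^* u`. -/
def TransInv {n : ℕ} (m : ℕ) (a : (Fin (n + 1) → ℕ) → (Fin (n + 1) → ℝ) → ℂ) : Prop :=
  ∀ y : Fin (n + 1) → ℝ, ∀ u : (Fin (n + 1) → ℝ) → ℂ, SmoothFn u →
    ∀ x, opApply m a u (x - y) = opApply m a (fun z => u (z - y)) x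

/-- `L` is Lorentz invariant: `Λ^* L u = L Λ^* u` for all `Λ ∈ O(1,n)`. -/
def LorentzInv {n : ℕ} (m : ℕ) (a : (Fin (n + 1) → ℕ) → (Fin (n + 1) → ℝ) → ℂ) : Prop :=
  ∀ Λ : Matrix (Fin (n + 1)) (Fin (n + 1)) ℝ, IsLorentz Λ →
    ∀ u : (Fin (n + 1) → ℝ) → ℂ, SmoothFn u →
      ∀ x, opApply m a u (Λ.mulVec x) = opApply m a (fun z => u (Λ.mulVec z)) x

lemma SmoothFn.pd' {d : ℕ} {u : (Fin d → ℝ) → ℂ} (hu : SmoothFn u) (i : Fin d) :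
    SmoothFn (pd i u) := by
  have h3 : ContDiff ℝ ∞ (fderiv ℝ u) := (contDiff_infty_iff_fderiv.mp hu).2
  exact h3.clm_apply (contDiff_const (c := Pi.single i 1))

lemma pd_comm {d : ℕ} {u : (Fin d → ℝ) → ℂ} (hu : SmoothFn u) (i j : Fin d) :
    pd i (pd j u) = pd j (pd i u) := by
  funext x
  have hsym : IsSymmSndFDerivAt ℝ u x :=
    (hu.contDiffAt).isSymmSndFDerivAt (by rw [minSmoothness_of_isRCLikeNormedField]; exact WithTop.coe_le_coe.mpr le_top)
  have hD : DifferentiableAt ℝ (fderiv ℝ u) x :=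
    ((contDiff_infty_iff_fderiv.mp hu).2.differentiable (by simp)).differentiableAt
  have key : ∀ (k : Fin d) (v : Fin d → ℝ), fderiv ℝ (fun y => fderiv ℝ u y v) x (Pi.single k 1)
      = fderiv ℝ (fderiv ℝ u) x (Pi.single k 1) v := by
    intro k v
    rw [fderiv_clm_apply hD (differentiableAt_const v)]
    simp
  show fderiv ℝ (fun y => fderiv ℝ u y (Pi.single j 1)) x (Pi.single i 1)
      = fderiv ℝ (fun y => fderiv ℝ u y (Pi.single i 1)) x (Pi.single j 1)
  rw [key i (Pi.single j 1), key j (Pi.single i 1)]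
  exact hsym.eq _ _

lemma SmoothFn.diff {d : ℕ} {u : (Fin d → ℝ) → ℂ} (hu : SmoothFn u) : Differentiable ℝ u :=
  hu.differentiable (by simp)

lemma pd_add {d : ℕ} {u v : (Fin d → ℝ) → ℂ} (hu : SmoothFn u) (hv : SmoothFn v) (i : Fin d) :
    pd i (fun x => u x + v x) = fun x => pd i u x + pd i v x := by
  funext x
  show fderiv ℝ (fun y => u y + v y) x _ = _
  rw [fderiv_fun_add (hu.diff x) (hv.diff x)]
  rfl

lemma pd_const_mul {d : ℕ} {u : (Fin d → ℝ) → ℂ} (hu : SmoothFn u) (a : ℂ) (i : Fin d) :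
    pd i (fun x => a * u x) = fun x => a * pd i u x := by
  funext x
  show fderiv ℝ (fun y => a * u y) x _ = _
  rw [fderiv_const_mul (hu.diff x) a]
  rfl

lemma pd_finset_sum {d : ℕ} {α : Type*} (T : Finset α) (f : α → (Fin d → ℝ) → ℂ)
    (hf : ∀ a ∈ T, SmoothFn (f a)) (i : Fin d) :
    pd i (fun x => ∑ a ∈ T, f a x) = fun x => ∑ a ∈ T, pd i (f a) x := by
  funext x
  show fderiv ℝ (fun y => ∑ a ∈ T, f a y) x _ = _
  rw [fderiv_fun_sum (fun a ha => (hf a ha).diff x)]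
  simp [pd]

lemma SmoothFn.constMul {d : ℕ} {u : (Fin d → ℝ) → ℂ} (hu : SmoothFn u) (a : ℂ) :
    SmoothFn (fun x => a * u x) := contDiff_const.mul hu

lemma SmoothFn.finsetSum {d : ℕ} {α : Type*} (T : Finset α) (f : α → (Fin d → ℝ) → ℂ)
    (hf : ∀ a ∈ T, SmoothFn (f a)) : SmoothFn (fun x => ∑ a ∈ T, f a x) :=
  ContDiff.sum hf

lemma SmoothFn.pdIter {d : ℕ} {u : (Fin d → ℝ) → ℂ} (hu : SmoothFn u) (i : Fin d) (k : ℕ) :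
    SmoothFn ((pd i)^[k] u) := by
  induction k generalizing u with
  | zero => exact hu
  | succ k ih => rw [Function.iterate_succ_apply]; exact ih (hu.pd' i)

lemma pd_iterate_comm {d : ℕ} {u : (Fin d → ℝ) → ℂ} (hu : SmoothFn u) (i j : Fin d) (k : ℕ) :
    pd i ((pd j)^[k] u) = (pd j)^[k] (pd i u) := by
  induction k generalizing u with
  | zero => rfl
  | succ k ih =>
    rw [Function.iterate_succ_apply, Function.iterate_succ_apply, ih (hu.pd' j), pd_comm hu]

lemma smooth_foldr {d : ℕ} (l : List (Fin d)) (β : Fin d → ℕ) {u : (Fin d → ℝ) → ℂ}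
    (hu : SmoothFn u) : SmoothFn (l.foldr (fun i v => (pd i)^[β i] v) u) := by
  induction l with
  | nil => exact hu
  | cons a t ih => exact ih.pdIter a (β a)

lemma SmoothFn.pdMulti' {d : ℕ} {u : (Fin d → ℝ) → ℂ} (hu : SmoothFn u) (β : Fin d → ℕ) :
    SmoothFn (pdMulti β u) := smooth_foldr _ β hu

lemma foldr_congr {d : ℕ} (l : List (Fin d)) (β γ : Fin d → ℕ) (u : (Fin d → ℝ) → ℂ)
    (h : ∀ i ∈ l, β i = γ i) :
    l.foldr (fun i v => (pd i)^[β i] v) u = l.foldr (fun i v => (pd i)^[γ i] v) u := by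
  induction l with
  | nil => rfl
  | cons a t ih =>
    simp only [List.foldr_cons]
    rw [ih (fun i hi => h i (List.mem_cons_of_mem a hi)), h a List.mem_cons_self]

lemma pd_foldr_comm {d : ℕ} (l : List (Fin d)) (β : Fin d → ℕ) {u : (Fin d → ℝ) → ℂ}
    (hu : SmoothFn u) (i : Fin d) :
    pd i (l.foldr (fun j v => (pd j)^[β j] v) u) = l.foldr (fun j v => (pd j)^[β j] v) (pd i u) := by
  induction l with
  | nil => rfl
  | cons a t ih =>
    simp only [List.foldr_cons]
    rw [pd_iterate_comm (smooth_foldr t β hu) i a, ih]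

lemma pdMulti_add_single {d : ℕ} (β : Fin d → ℕ) (i : Fin d) {u : (Fin d → ℝ) → ℂ}
    (hu : SmoothFn u) :
    pdMulti (β + Pi.single i 1) u = pd i (pdMulti β u) := by
  unfold pdMulti
  have hmem : i ∈ List.finRange d := List.mem_finRange i
  have hnd : (List.finRange d).Nodup := List.nodup_finRange d
  revert hmem hnd
  generalize (List.finRange d) = l
  induction l with
  | nil => intro h; exact absurd h List.not_mem_nil
  | cons a t ih =>
    intro hmem hnd
    simp only [List.foldr_cons]
    rcases eq_or_ne a i with rfl | hne
    · have hit : a ∉ t := (List.nodup_cons.mp hnd).1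
      have : t.foldr (fun j v => (pd j)^[(β + Pi.single a 1 : Fin d → ℕ) j] v) u
          = t.foldr (fun j v => (pd j)^[β j] v) u := by
        apply foldr_congr
        intro j hj
        have : j ≠ a := fun h => hit (h ▸ hj)
        simp [Pi.single_apply, this]
      have h2 : (β + Pi.single a 1 : Fin d → ℕ) a = β a + 1 := by simp
      rw [this, h2, Function.iterate_succ_apply']
    · rcases List.mem_cons.mp hmem with h | h
      · exact absurd h.symm hne
      · have hnd' := (List.nodup_cons.mp hnd).2
        rw [ih h hnd']
        have h3 : (β + Pi.single i 1 : Fin d → ℕ) a = β a := by simp [Pi.single_apply, hne]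
        rw [h3, pd_iterate_comm (smooth_foldr t β hu) i a]

lemma pdMulti_zero {d : ℕ} (u : (Fin d → ℝ) → ℂ) : pdMulti 0 u = u := by
  unfold pdMulti
  generalize (List.finRange d) = l
  induction l with
  | nil => rfl
  | cons a t ih => simp only [List.foldr_cons, Pi.zero_apply, Function.iterate_zero, id]; exact ih


open MvPolynomial in
def Dop {d : ℕ} (P : MvPolynomial (Fin d) ℂ) (u : (Fin d → ℝ) → ℂ) : (Fin d → ℝ) → ℂ :=
  fun x => ∑ β ∈ P.support, P.coeff β * pdMulti (⇑β) u x

lemma Dop_superset {d : ℕ} (P : MvPolynomial (Fin d) ℂ) (u : (Fin d → ℝ) → ℂ)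
    {T : Finset (Fin d →₀ ℕ)} (hT : P.support ⊆ T) (x : Fin d → ℝ) :
    Dop P u x = ∑ β ∈ T, P.coeff β * pdMulti (⇑β) u x := by
  refine Finset.sum_subset hT (fun β _ hβ => ?_)
  rw [MvPolynomial.notMem_support_iff.mp hβ, zero_mul]

lemma SmoothFn.dop {d : ℕ} {u : (Fin d → ℝ) → ℂ} (hu : SmoothFn u)
    (P : MvPolynomial (Fin d) ℂ) : SmoothFn (Dop P u) :=
  SmoothFn.finsetSum _ _ (fun β _ => (hu.pdMulti' (⇑β)).constMul _)

lemma Dop_add {d : ℕ} (P Q : MvPolynomial (Fin d) ℂ) (u : (Fin d → ℝ) → ℂ) (x : Fin d → ℝ) :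
    Dop (P + Q) u x = Dop P u x + Dop Q u x := by
  rw [Dop_superset (P+Q) u (T := P.support ∪ Q.support) (MvPolynomial.support_add),
      Dop_superset P u (Finset.subset_union_left), Dop_superset Q u (Finset.subset_union_right),
      ← Finset.sum_add_distrib]
  exact Finset.sum_congr rfl (fun β _ => by rw [MvPolynomial.coeff_add, add_mul])

lemma Dop_sub {d : ℕ} (P Q : MvPolynomial (Fin d) ℂ) (u : (Fin d → ℝ) → ℂ) (x : Fin d → ℝ) :
    Dop (P - Q) u x = Dop P u x - Dop Q u x := by
  rw [Dop_superset (P-Q) u (T := P.support ∪ Q.support) (MvPolynomial.support_sub _ _ _),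
      Dop_superset P u (Finset.subset_union_left), Dop_superset Q u (Finset.subset_union_right),
      ← Finset.sum_sub_distrib]
  exact Finset.sum_congr rfl (fun β _ => by rw [MvPolynomial.coeff_sub, sub_mul])

lemma Dop_zero {d : ℕ} (u : (Fin d → ℝ) → ℂ) (x : Fin d → ℝ) : Dop 0 u x = 0 := by
  simp [Dop]

lemma Dop_monomial {d : ℕ} (γ : Fin d →₀ ℕ) (a : ℂ) (u : (Fin d → ℝ) → ℂ) (x : Fin d → ℝ) :
    Dop (MvPolynomial.monomial γ a) u x = a * pdMulti (⇑γ) u x := by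
  rw [Dop_superset _ u (T := {γ}) MvPolynomial.support_monomial_subset, Finset.sum_singleton,
      MvPolynomial.coeff_monomial, if_pos rfl]

lemma Dop_one {d : ℕ} (u : (Fin d → ℝ) → ℂ) (x : Fin d → ℝ) : Dop 1 u x = u x := by
  have h1 : (1 : MvPolynomial (Fin d) ℂ) = MvPolynomial.monomial 0 1 := by
    simp [MvPolynomial.monomial_zero']
  rw [h1, Dop_monomial, one_mul]
  have : (⇑(0 : Fin d →₀ ℕ) : Fin d → ℕ) = 0 := rfl
  rw [this, pdMulti_zero]

lemma Dop_C_mul {d : ℕ} (a : ℂ) (P : MvPolynomial (Fin d) ℂ) (u : (Fin d → ℝ) → ℂ)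
    (x : Fin d → ℝ) : Dop (MvPolynomial.C a * P) u x = a * Dop P u x := by
  rw [MvPolynomial.C_mul']
  rw [Dop_superset (a • P) u (T := P.support) (MvPolynomial.support_smul), Dop, Finset.mul_sum]
  exact Finset.sum_congr rfl (fun β _ => by rw [MvPolynomial.coeff_smul, smul_eq_mul, mul_assoc])

lemma Dop_finsetSum {d : ℕ} {α : Type*} (J : Finset α) (F : α → MvPolynomial (Fin d) ℂ)
    (u : (Fin d → ℝ) → ℂ) (x : Fin d → ℝ) :
    Dop (∑ j ∈ J, F j) u x = ∑ j ∈ J, Dop (F j) u x := by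
  induction J using Finset.cons_induction with
  | empty => simp [Dop_zero]
  | cons a s ha ih => rw [Finset.sum_cons, Finset.sum_cons, Dop_add, ih]

lemma Dop_X_mul {d : ℕ} (i : Fin d) (P : MvPolynomial (Fin d) ℂ) {u : (Fin d → ℝ) → ℂ}
    (hu : SmoothFn u) : Dop (MvPolynomial.X i * P) u = pd i (Dop P u) := by
  induction P using MvPolynomial.induction_on' with
  | monomial γ a =>
    have h1 : MvPolynomial.X i * MvPolynomial.monomial γ a
        = MvPolynomial.monomial (γ + Finsupp.single i 1) a := by
      rw [MvPolynomial.X, MvPolynomial.monomial_mul, one_mul, add_comm]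
    funext x
    rw [h1, Dop_monomial]
    have h2 := Finsupp.coe_add γ (Finsupp.single i 1)
    rw [h2, Finsupp.single_eq_pi_single, pdMulti_add_single _ _ hu]
    have h3 : Dop (MvPolynomial.monomial γ a) u = fun y => a * pdMulti (⇑γ) u y := by
      funext y; rw [Dop_monomial]
    rw [h3, pd_const_mul (hu.pdMulti' (⇑γ)) a i]
  | add p q hp hq =>
    have h3 : Dop (p + q) u = fun y => Dop p u y + Dop q u y := by
      funext y; rw [Dop_add]
    rw [mul_add, h3, pd_add (hu.dop p) (hu.dop q) i]
    funext x
    rw [Dop_add, hp, hq]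

def qPoly (n : ℕ) : MvPolynomial (Fin (n+1)) ℂ :=
  MvPolynomial.X 0 ^ 2 - ∑ j : Fin n, MvPolynomial.X j.succ ^ 2

lemma dAlem_Dop {n : ℕ} (P : MvPolynomial (Fin (n+1)) ℂ) {u : (Fin (n+1) → ℝ) → ℂ}
    (hu : SmoothFn u) : dAlem (Dop P u) = Dop (qPoly n * P) u := by
  have hX2 : ∀ (i : Fin (n+1)), Dop (MvPolynomial.X i ^ 2 * P) u = pd i (pd i (Dop P u)) := by
    intro i
    rw [pow_two, mul_assoc, Dop_X_mul i _ hu]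
    rw [Dop_X_mul i P hu]
  funext x
  have hq : qPoly n * P = MvPolynomial.X 0 ^ 2 * P
      - ∑ j : Fin n, MvPolynomial.X j.succ ^ 2 * P := by
    rw [qPoly, sub_mul, Finset.sum_mul]
  rw [hq, Dop_sub, Dop_finsetSum, hX2 0]
  show dAlem (Dop P u) x = _
  rw [dAlem]
  congr 1
  exact Finset.sum_congr rfl (fun j _ => by rw [hX2 j.succ])

lemma dAlem_iterate {n : ℕ} {u : (Fin (n+1) → ℝ) → ℂ} (hu : SmoothFn u) (j : ℕ) :
    dAlem^[j] u = Dop (qPoly n ^ j) u := by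
  induction j with
  | zero =>
    funext x
    rw [Function.iterate_zero, id, pow_zero, Dop_one]
  | succ j ih =>
    rw [Function.iterate_succ_apply', ih, dAlem_Dop _ hu, ← pow_succ']


def symb {d : ℕ} (m : ℕ) (c : (Fin d → ℕ) → ℂ) (ξ : Fin d → ℝ) : ℂ :=
  ∑ β ∈ mIdx d m, c β * ∏ i, (ξ i : ℂ) ^ (β i)

def linC {d : ℕ} (ξ : Fin d → ℝ) : (Fin d → ℝ) →L[ℝ] ℂ :=
  Complex.ofRealCLM.comp (∑ i, ξ i • ContinuousLinearMap.proj i)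

lemma linC_apply {d : ℕ} (ξ x : Fin d → ℝ) : linC ξ x = ((∑ i, ξ i * x i : ℝ) : ℂ) := by
  simp [linC, ContinuousLinearMap.sum_apply]

def expFn {d : ℕ} (ξ : Fin d → ℝ) : (Fin d → ℝ) → ℂ := fun x => Complex.exp (linC ξ x)

lemma expFn_smooth {d : ℕ} (ξ : Fin d → ℝ) : SmoothFn (expFn ξ) :=
  (linC ξ).contDiff.cexp

lemma pd_expFn {d : ℕ} (ξ : Fin d → ℝ) (i : Fin d) :
    pd i (expFn ξ) = fun x => (ξ i : ℂ) * expFn ξ x := by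
  funext x
  have h := ((linC ξ).hasFDerivAt (x := x)).cexp
  have hf : fderiv ℝ (expFn ξ) x = Complex.exp (linC ξ x) • linC ξ := h.fderiv
  show fderiv ℝ (expFn ξ) x (Pi.single i 1) = _
  rw [hf]
  have h2 : linC ξ (Pi.single i 1) = (ξ i : ℂ) := by
    rw [linC_apply]
    norm_cast
    simp [Pi.single_apply]
  simp [h2, expFn, mul_comm]

lemma pd_mul_expFn {d : ℕ} (ξ : Fin d → ℝ) (a : ℂ) (i : Fin d) :
    pd i (fun x => a * expFn ξ x) = fun x => (a * (ξ i : ℂ)) * expFn ξ x := by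
  rw [pd_const_mul (expFn_smooth ξ) a i, pd_expFn]
  funext x; ring

lemma iter_pd_expFn {d : ℕ} (ξ : Fin d → ℝ) (i : Fin d) (k : ℕ) (a : ℂ) :
    (pd i)^[k] (fun x => a * expFn ξ x) = fun x => (a * (ξ i : ℂ) ^ k) * expFn ξ x := by
  induction k generalizing a with
  | zero => simp
  | succ k ih =>
    rw [Function.iterate_succ_apply, pd_mul_expFn, ih]
    funext x; ring

lemma foldr_expFn {d : ℕ} (ξ : Fin d → ℝ) (l : List (Fin d)) (β : Fin d → ℕ) (a : ℂ) :
    l.foldr (fun i v => (pd i)^[β i] v) (fun x => a * expFn ξ x)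
      = fun x => (a * (l.map fun i => (ξ i : ℂ) ^ (β i)).prod) * expFn ξ x := by
  induction l with
  | nil => simp
  | cons j t ih =>
    rw [List.foldr_cons, ih, iter_pd_expFn]
    funext x
    simp only [List.map_cons, List.prod_cons]
    ring

lemma pdMulti_expFn {d : ℕ} (ξ : Fin d → ℝ) (β : Fin d → ℕ) :
    pdMulti β (expFn ξ) = fun x => (∏ i, (ξ i : ℂ) ^ (β i)) * expFn ξ x := by
  have h0 : expFn ξ = fun x => (1:ℂ) * expFn ξ x := by funext x; rw [one_mul]
  rw [pdMulti, h0, foldr_expFn]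
  funext x
  simp only [one_mul, Fin.prod_univ_def]

lemma opApply_expFn {d : ℕ} (m : ℕ) (c : (Fin d → ℕ) → ℂ) (ξ : Fin d → ℝ) (x : Fin d → ℝ) :
    opApply m (fun β _ => c β) (expFn ξ) x = symb m c ξ * expFn ξ x := by
  rw [opApply, symb, Finset.sum_mul]
  refine Finset.sum_congr rfl (fun β _ => ?_)
  rw [pdMulti_expFn]
  ring

lemma expFn_zero_eq_one {d : ℕ} (ξ : Fin d → ℝ) : expFn ξ 0 = 1 := by
  simp [expFn, linC_apply]

lemma expFn_comp_mulVec {n : ℕ} (ξ : Fin (n+1) → ℝ) (Λ : Matrix (Fin (n+1)) (Fin (n+1)) ℝ) :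
    (fun z => expFn ξ (Λ.mulVec z)) = expFn (Matrix.vecMul ξ Λ) := by
  funext z
  unfold expFn
  congr 1
  rw [linC_apply, linC_apply]
  norm_cast
  simp only [Matrix.mulVec, Matrix.vecMul, dotProduct, Finset.mul_sum, Finset.sum_mul]
  rw [Finset.sum_comm]
  exact Finset.sum_congr rfl fun j _ => Finset.sum_congr rfl fun i _ => by ring

lemma mink_sq (n : ℕ) : minkMatrix n * minkMatrix n = 1 := by
  rw [minkMatrix, Matrix.diagonal_mul_diagonal]
  have h : (fun i : Fin (n+1) => (if i = 0 then (1:ℝ) else -1) * (if i = 0 then 1 else -1))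
      = fun _ => 1 := by
    funext i; by_cases h : i = 0 <;> simp [h]
  rw [h, Matrix.diagonal_one]

lemma isLorentz_transpose {n : ℕ} {Λ : Matrix (Fin (n+1)) (Fin (n+1)) ℝ} (h : IsLorentz Λ) :
    IsLorentz Λ.transpose := by
  unfold IsLorentz at h ⊢
  have h1 : (minkMatrix n * Λ.transpose * minkMatrix n) * Λ = 1 := by
    rw [Matrix.mul_assoc, Matrix.mul_assoc, ← Matrix.mul_assoc Λ.transpose, h, mink_sq]
  have h2 : Λ * (minkMatrix n * Λ.transpose * minkMatrix n) = 1 := mul_eq_one_comm.mp h1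
  have h3 := congrArg (· * minkMatrix n) h2
  simp only [Matrix.mul_assoc, mink_sq, Matrix.mul_one, Matrix.one_mul] at h3
  rw [Matrix.transpose_transpose]
  rw [← Matrix.mul_assoc] at h3
  exact h3

lemma symb_inv {n m : ℕ} {c : (Fin (n+1) → ℕ) → ℂ} (hL : LorentzInv m (fun β _ => c β))
    {Λ : Matrix (Fin (n+1)) (Fin (n+1)) ℝ} (hΛ : IsLorentz Λ) (ξ : Fin (n+1) → ℝ) :
    symb m c (Λ.mulVec ξ) = symb m c ξ := by
  have key : ∀ (M : Matrix (Fin (n+1)) (Fin (n+1)) ℝ), IsLorentz M →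
      symb m c (Matrix.vecMul ξ M) = symb m c ξ := by
    intro M hM
    have h := hL M hM (expFn ξ) (expFn_smooth ξ) 0
    rw [Matrix.mulVec_zero, opApply_expFn, expFn_zero_eq_one, mul_one] at h
    rw [expFn_comp_mulVec, opApply_expFn, expFn_zero_eq_one, mul_one] at h
    exact h.symm
  have := key Λ.transpose (isLorentz_transpose hΛ)
  rw [Matrix.vecMul_transpose] at this
  exact this


lemma coeff_sum_monomial {d : ℕ} {R : Type*} [CommSemiring R] (S : Finset (Fin d →₀ ℕ))
    (f : (Fin d →₀ ℕ) → R) (γ : Fin d →₀ ℕ) :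
    MvPolynomial.coeff γ (∑ β ∈ S, MvPolynomial.monomial β (f β)) = if γ ∈ S then f γ else 0 := by
  rw [MvPolynomial.coeff_sum]
  rw [Finset.sum_congr rfl (fun β _ => MvPolynomial.coeff_monomial γ β (f β))]
  simp [Finset.sum_ite_eq]

lemma re_im_poly_eval {d : ℕ} (p : MvPolynomial (Fin d) ℂ) (x : Fin d → ℝ)
    (g : ℂ → ℝ) (hg : ∀ (a : ℂ) (r : ℝ), g (a * r) = g a * r) (hsum : ∀ (s : Finset (Fin d →₀ ℕ)) (F : (Fin d →₀ ℕ) → ℂ), g (∑ β ∈ s, F β) = ∑ β ∈ s, g (F β)) :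
    g (MvPolynomial.eval (fun i => (x i : ℂ)) p)
      = MvPolynomial.eval x (∑ β ∈ p.support, MvPolynomial.monomial β (g (p.coeff β))) := by
  have h1 : MvPolynomial.eval (fun i => (x i : ℂ)) p
      = ∑ β ∈ p.support, p.coeff β * ((∏ i ∈ β.support, x i ^ β i : ℝ) : ℂ) := by
    rw [MvPolynomial.eval_eq]
    refine Finset.sum_congr rfl fun β _ => ?_
    push_cast
    rfl
  rw [h1, hsum, map_sum]
  refine Finset.sum_congr rfl fun β _ => ?_
  rw [MvPolynomial.eval_monomial, hg]
  congr 1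

lemma mv_eval_real_zero {d : ℕ} (p : MvPolynomial (Fin d) ℂ)
    (h : ∀ x : Fin d → ℝ, MvPolynomial.eval (fun i => (x i : ℂ)) p = 0) : p = 0 := by
  have hre : ∀ (a : ℂ) (r : ℝ), ((a * r : ℂ)).re = a.re * r := by
    intro a r; simp [Complex.mul_re]
  have him : ∀ (a : ℂ) (r : ℝ), ((a * r : ℂ)).im = a.im * r := by
    intro a r; simp [Complex.mul_im]
  have hresum : ∀ (s : Finset (Fin d →₀ ℕ)) (F : (Fin d →₀ ℕ) → ℂ),
      (∑ β ∈ s, F β).re = ∑ β ∈ s, (F β).re := fun s F => Complex.re_sum s F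
  have himsum : ∀ (s : Finset (Fin d →₀ ℕ)) (F : (Fin d →₀ ℕ) → ℂ),
      (∑ β ∈ s, F β).im = ∑ β ∈ s, (F β).im := fun s F => Complex.im_sum s F
  have hre0 : (∑ β ∈ p.support, MvPolynomial.monomial β ((p.coeff β).re)) = 0 := by
    apply MvPolynomial.funext
    intro x
    rw [← re_im_poly_eval p x Complex.re hre hresum, h x, map_zero]
    rfl
  have him0 : (∑ β ∈ p.support, MvPolynomial.monomial β ((p.coeff β).im)) = 0 := by
    apply MvPolynomial.funext
    intro x
    rw [← re_im_poly_eval p x Complex.im him himsum, h x, map_zero]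
    rfl
  ext β
  rw [MvPolynomial.coeff_zero]
  by_cases hβ : β ∈ p.support
  · have h1 := congrArg (MvPolynomial.coeff β) hre0
    have h2 := congrArg (MvPolynomial.coeff β) him0
    rw [coeff_sum_monomial, if_pos hβ, MvPolynomial.coeff_zero] at h1 h2
    exact Complex.ext h1 h2
  · exact MvPolynomial.notMem_support_iff.mp hβ

lemma mv_eval_real_eq {d : ℕ} (p q : MvPolynomial (Fin d) ℂ)
    (h : ∀ x : Fin d → ℝ, MvPolynomial.eval (fun i => (x i : ℂ)) p
        = MvPolynomial.eval (fun i => (x i : ℂ)) q) : p = q := by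
  have := mv_eval_real_zero (p - q) (fun x => by rw [map_sub, h x, sub_self])
  exact sub_eq_zero.mp this

lemma poly_eq_of_eval_real {p q : Polynomial ℂ} {S : Set ℝ} (hS : S.Infinite)
    (h : ∀ t ∈ S, p.eval (t : ℂ) = q.eval (t : ℂ)) : p = q := by
  have hroots : {z : ℂ | (p - q).IsRoot z}.Infinite := by
    apply Set.Infinite.mono (s := (fun t : ℝ => (t : ℂ)) '' S)
    · rintro z ⟨t, ht, rfl⟩
      simp [Polynomial.IsRoot, h t ht]
    · exact Set.Infinite.image (fun a _ b _ hab => Complex.ofReal_injective hab) hS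
  have := Polynomial.eq_zero_of_infinite_isRoot _ hroots
  exact sub_eq_zero.mp this


def embed2 {d : ℕ} (t s : ℝ) : Fin d → ℝ :=
  fun i => if (i : ℕ) = 0 then t else if (i : ℕ) = 1 then s else 0

def flipT (n : ℕ) : Matrix (Fin (n+1)) (Fin (n+1)) ℝ :=
  Matrix.diagonal (fun i => if i = 0 then -1 else 1)

lemma flipT_lorentz (n : ℕ) : IsLorentz (flipT n) := by
  unfold IsLorentz flipT minkMatrix
  rw [Matrix.diagonal_transpose, Matrix.diagonal_mul_diagonal, Matrix.diagonal_mul_diagonal]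
  ext i j
  rcases eq_or_ne i j with rfl | hij
  · rw [Matrix.diagonal_apply_eq, Matrix.diagonal_apply_eq]
    by_cases h : i = 0 <;> simp [h]
  · rw [Matrix.diagonal_apply_ne _ hij, Matrix.diagonal_apply_ne _ hij]

lemma flipT_mulVec {n : ℕ} (t s : ℝ) : (flipT n).mulVec (embed2 t s) = embed2 (-t) s := by
  funext i
  show ((Matrix.diagonal _).mulVec _) i = _
  rw [Matrix.mulVec_diagonal]
  by_cases h : i = 0
  · subst h; simp [embed2]
  · have h' : (i : ℕ) ≠ 0 := fun hc => h (Fin.ext hc)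
    simp [embed2, h, h']

lemma householder {n : ℕ} (w : Fin (n+1) → ℝ) (hw0 : w 0 = 0) (hs : (∑ i, w i * w i) ≠ 0) :
    ∃ Λ : Matrix (Fin (n+1)) (Fin (n+1)) ℝ, IsLorentz Λ ∧
      ∀ ξ : Fin (n+1) → ℝ, Λ.mulVec ξ
        = fun i => ξ i - ((2 / ∑ i, w i * w i) * ∑ j, w j * ξ j) * w i := by
  set s := ∑ i, w i * w i with hsdef
  set κ := 2 / s with hκ
  set W := Matrix.vecMulVec w w with hW
  have hκs : κ * s = 2 := div_mul_cancel₀ 2 hs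
  have hWW : W * W = s • W := by
    ext i j
    simp only [Matrix.mul_apply, Matrix.vecMulVec_apply, Matrix.smul_apply, smul_eq_mul, hW]
    calc ∑ k, w i * w k * (w k * w j) = ∑ k, (w k * w k) * (w i * w j) := by
          exact Finset.sum_congr rfl fun k _ => by ring
      _ = s * (w i * w j) := by rw [← Finset.sum_mul]
  have hgW : minkMatrix n * W = (-1 : ℝ) • W := by
    ext i j
    rw [show minkMatrix n = Matrix.diagonal (fun i : Fin (n+1) => if i = 0 then (1:ℝ) else -1)
      from rfl, Matrix.diagonal_mul]
    by_cases h : i = 0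
    · subst h; simp [Matrix.vecMulVec_apply, hw0, hW]
    · simp [Matrix.vecMulVec_apply, h, hW]
  have hWg : W * minkMatrix n = (-1 : ℝ) • W := by
    ext i j
    rw [show minkMatrix n = Matrix.diagonal (fun i : Fin (n+1) => if i = 0 then (1:ℝ) else -1)
      from rfl, Matrix.mul_diagonal]
    by_cases h : j = 0
    · subst h; simp [Matrix.vecMulVec_apply, hw0, hW]
    · simp [Matrix.vecMulVec_apply, h, hW, mul_comm]
  have hWt : W.transpose = W := by
    ext i j
    simp [Matrix.transpose_apply, Matrix.vecMulVec_apply, mul_comm, hW]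
  refine ⟨1 - κ • W, ?_, ?_⟩
  · have hTr : (1 - κ • W).transpose = 1 - κ • W := by
      rw [Matrix.transpose_sub, Matrix.transpose_one, Matrix.transpose_smul, hWt]
    have key : (1 - κ • W) * (minkMatrix n * (1 - κ • W))
        = minkMatrix n + (2 * κ - κ * κ * s) • W := by
      have hWnW : W * ((-1 : ℝ) • W) = ((-1 : ℝ) * s) • W := by
        rw [Matrix.mul_smul, hWW, smul_smul]
      rw [Matrix.mul_sub, Matrix.mul_one, Matrix.mul_smul, hgW, Matrix.mul_sub,
          Matrix.sub_mul, Matrix.sub_mul, Matrix.one_mul, Matrix.one_mul,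
          Matrix.smul_mul, hWg, Matrix.smul_mul, Matrix.mul_smul, hWnW]
      module
    show (1 - κ • W).transpose * minkMatrix n * (1 - κ • W) = minkMatrix n
    rw [hTr, Matrix.mul_assoc, key]
    have hz : 2 * κ - κ * κ * s = 0 := by rw [mul_assoc, hκs]; ring
    rw [hz, zero_smul, add_zero]
  · intro ξ
    funext i
    rw [Matrix.sub_mulVec, Matrix.one_mulVec, Matrix.smul_mulVec]
    have hWv : W.mulVec ξ = fun i => w i * ∑ j, w j * ξ j := by
      funext i
      show (∑ j, W i j * ξ j) = _
      simp only [Matrix.vecMulVec_apply, hW]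
      rw [Finset.mul_sum]
      exact Finset.sum_congr rfl fun j _ => by ring
    rw [hWv]
    show ξ i - κ * (w i * ∑ j, w j * ξ j) = _
    ring

lemma fin2_cases {n : ℕ} (i : Fin (n+2)) : i = 0 ∨ i = 1 ∨ ∃ i' : Fin n, i = i'.succ.succ := by
  rcases Fin.eq_zero_or_eq_succ i with h | ⟨j, rfl⟩
  · exact Or.inl h
  rcases Fin.eq_zero_or_eq_succ j with h | ⟨k, rfl⟩
  · subst h; exact Or.inr (Or.inl (Fin.succ_zero_eq_one))
  · exact Or.inr (Or.inr ⟨k, rfl⟩)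

lemma sum_split {n : ℕ} (f : Fin (n+2) → ℝ) :
    ∑ k, f k = f 0 + f 1 + ∑ k : Fin n, f k.succ.succ := by
  rw [Fin.sum_univ_succ, Fin.sum_univ_succ, Fin.succ_zero_eq_one]
  exact (add_assoc _ _ _).symm

def bst (n : ℕ) (θ : ℝ) : Matrix (Fin (n+2)) (Fin (n+2)) ℝ :=
  fun k i => if k = 0 then (if i = 0 then Real.cosh θ else if i = 1 then Real.sinh θ else 0)
    else if k = 1 then (if i = 0 then Real.sinh θ else if i = 1 then Real.cosh θ else 0)
    else if k = i then 1 else 0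

lemma h01eq_aux (n : ℕ) : (1 : Fin (n+2)) ≠ 0 := by
  intro h
  have := congrArg Fin.val h
  simp at this

lemma ss_ne_zero {n : ℕ} (k : Fin n) : (k.succ.succ : Fin (n+2)) ≠ 0 := Fin.succ_ne_zero _

lemma ss_ne_one {n : ℕ} (k : Fin n) : (k.succ.succ : Fin (n+2)) ≠ 1 := by
  intro h
  rw [← Fin.succ_zero_eq_one] at h
  exact Fin.succ_ne_zero k (Fin.succ_injective _ h)

lemma zero_ne_ss {n : ℕ} (k : Fin n) : (0 : Fin (n+2)) ≠ k.succ.succ := (ss_ne_zero k).symm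

lemma one_ne_ss {n : ℕ} (k : Fin n) : (1 : Fin (n+2)) ≠ k.succ.succ := (ss_ne_one k).symm

lemma bst_lorentz (n : ℕ) (θ : ℝ) : IsLorentz (bst n θ) := by
  have hch := Real.cosh_sq_sub_sinh_sq θ
  have h01 : (0 : Fin (n+2)) ≠ 1 := by
    intro h
    have := congrArg Fin.val h
    simp at this
  unfold IsLorentz
  rw [Matrix.mul_assoc]
  ext i j
  rw [Matrix.mul_apply]
  have hg : ∀ k l, (minkMatrix (n+1) * bst n θ) k l = (if k = 0 then 1 else -1) * bst n θ k l := by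
    intro k l
    rw [show minkMatrix (n+1) = Matrix.diagonal (fun i : Fin (n+2) => if i = 0 then (1:ℝ) else -1)
      from rfl, Matrix.diagonal_mul]
  simp only [Matrix.transpose_apply, hg]
  rw [sum_split (fun k => bst n θ k i * ((if k = 0 then 1 else -1) * bst n θ k j))]
  have hb0 : ∀ l, bst n θ 0 l = (if l = 0 then Real.cosh θ else if l = 1 then Real.sinh θ else 0) := by
    intro l; simp [bst]
  have hb1 : ∀ l, bst n θ 1 l = (if l = 0 then Real.sinh θ else if l = 1 then Real.cosh θ else 0) := by
    intro l; simp [bst, h01.symm]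
  have hbs : ∀ (k' : Fin n) l, bst n θ k'.succ.succ l = (if k'.succ.succ = l then 1 else 0) := by
    intro k' l
    simp [bst, ss_ne_zero k', ss_ne_one k']
  have hmink : minkMatrix (n+1) i j = if i = j then (if i = 0 then 1 else -1) else 0 := by
    unfold minkMatrix
    rw [Matrix.diagonal_apply]
  simp only [hb0, hb1, hbs, if_pos rfl, if_neg h01.symm, if_neg (Fin.succ_ne_zero _)]
  rw [hmink]
  rcases fin2_cases i with rfl | rfl | ⟨i', rfl⟩ <;> rcases fin2_cases j with rfl | rfl | ⟨j', rfl⟩ <;>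
    simp [h01, h01.symm, ss_ne_zero, ss_ne_one, zero_ne_ss, one_ne_ss, Fin.succ_inj,
      Finset.sum_ite_eq']
  · nlinarith
  · ring
  · ring
  · nlinarith
  · by_cases hij : i' = j'
    · subst hij; simp
    · simp [hij, Ne.symm hij]

lemma bst_mulVec (n : ℕ) (θ σ : ℝ) :
    (bst n θ).mulVec (embed2 σ 0) = embed2 (σ * Real.cosh θ) (σ * Real.sinh θ) := by
  funext i
  show (∑ k, bst n θ i k * embed2 σ 0 k) = _
  have he : ∀ k : Fin (n+2), embed2 σ 0 k = if k = 0 then σ else 0 := by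
    intro k
    unfold embed2
    by_cases hk : k = 0
    · subst hk; simp
    · have h2 : (k : ℕ) ≠ 0 := fun hc => hk (Fin.ext hc)
      simp [h2, hk]
  have hsum : (∑ k, bst n θ i k * embed2 σ 0 k) = bst n θ i 0 * σ := by
    rw [Finset.sum_congr rfl (fun k _ => by rw [he k, mul_ite, mul_zero])]
    rw [Finset.sum_ite_eq' Finset.univ (0 : Fin (n+2)) (fun k => bst n θ i k * σ)]
    simp
  rw [hsum]
  unfold bst embed2
  rcases fin2_cases i with rfl | rfl | ⟨i', rfl⟩
  · simp [mul_comm]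
  · simp [h01eq_aux n, mul_comm]
  · simp [ss_ne_zero i', ss_ne_one i', Fin.val_succ]



def toF {d : ℕ} (β : Fin d → ℕ) : Fin d →₀ ℕ := Finsupp.equivFunOnFinite.symm β

lemma coe_toF {d : ℕ} (β : Fin d → ℕ) : ⇑(toF β) = β := rfl

lemma toF_inj {d : ℕ} : Function.Injective (toF (d := d)) :=
  Finsupp.equivFunOnFinite.symm.injective

lemma degree_toF {d : ℕ} (β : Fin d → ℕ) : (toF β).degree = ∑ i, β i := by
  rw [Finsupp.degree_apply]
  rw [Finset.sum_subset (Finset.subset_univ (toF β).support)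
    (fun i _ hi => Finsupp.notMem_support_iff.mp hi)]
  rfl

def cP (d m : ℕ) (c : (Fin d → ℕ) → ℂ) : MvPolynomial (Fin d) ℂ :=
  ∑ β ∈ mIdx d m, MvPolynomial.monomial (toF β) (c β)

lemma finsuppProd_eq_prod {d : ℕ} (γ : Fin d →₀ ℕ) (g : Fin d → ℕ → ℂ)
    (hg : ∀ i, g i 0 = 1) : γ.prod g = ∏ i, g i (γ i) :=
  Finsupp.prod_fintype γ g hg

lemma eval_cP {d m : ℕ} (c : (Fin d → ℕ) → ℂ) (x : Fin d → ℝ) :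
    MvPolynomial.eval (fun i => (x i : ℂ)) (cP d m c) = symb m c x := by
  rw [cP, map_sum, symb]
  refine Finset.sum_congr rfl fun β _ => ?_
  rw [MvPolynomial.eval_monomial, finsuppProd_eq_prod _ _ (fun i => pow_zero _)]
  rfl

lemma coeff_cP {d m : ℕ} (c : (Fin d → ℕ) → ℂ) {β₀ : Fin d → ℕ} (hβ : β₀ ∈ mIdx d m) :
    MvPolynomial.coeff (toF β₀) (cP d m c) = c β₀ := by
  rw [cP, MvPolynomial.coeff_sum]
  rw [Finset.sum_eq_single β₀ (fun β _ hne => by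
    rw [MvPolynomial.coeff_monomial, if_neg (fun h => hne (toF_inj h))]) (fun h => absurd hβ h)]
  rw [MvPolynomial.coeff_monomial, if_pos rfl]

lemma opApply_eq_Dop {n m : ℕ} (c : (Fin (n+1) → ℕ) → ℂ) (u : (Fin (n+1) → ℝ) → ℂ)
    (x : Fin (n+1) → ℝ) :
    opApply m (fun β _ => c β) u x = Dop (cP (n+1) m c) u x := by
  have hsupp : (cP (n+1) m c).support ⊆ (mIdx (n+1) m).image toF := by
    refine Finset.Subset.trans (MvPolynomial.support_sum) ?_
    intro γ hγ
    rw [Finset.mem_biUnion] at hγ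
    obtain ⟨β, hβ, hγ2⟩ := hγ
    have := MvPolynomial.support_monomial_subset hγ2
    rw [Finset.mem_singleton] at this
    exact Finset.mem_image.mpr ⟨β, hβ, this.symm⟩
  rw [Dop_superset _ u hsupp, Finset.sum_image (fun β _ β' _ h => toF_inj h)]
  refine Finset.sum_congr rfl fun β hβ => ?_
  rw [coeff_cP c hβ, coe_toF]

lemma Xsq_homog {n : ℕ} (i : Fin (n+1)) :
    (MvPolynomial.X i ^ 2 : MvPolynomial (Fin (n+1)) ℂ).IsHomogeneous 2 := by
  rw [pow_two]
  exact (MvPolynomial.isHomogeneous_X ℂ i).mul (MvPolynomial.isHomogeneous_X ℂ i)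

lemma qPoly_homog (n : ℕ) : (qPoly n).IsHomogeneous 2 :=
  (Xsq_homog 0).sub (MvPolynomial.IsHomogeneous.sum Finset.univ _ 2 fun j _ => Xsq_homog j.succ)

lemma qPoly_pow_homog (n j : ℕ) : (qPoly n ^ j).IsHomogeneous (2 * j) := by
  induction j with
  | zero => simpa using MvPolynomial.isHomogeneous_one (Fin (n+1)) ℂ
  | succ j ih =>
    have := ih.mul (qPoly_homog n)
    rw [← pow_succ] at this
    have h2 : 2 * j + 2 = 2 * (j + 1) := by ring
    rw [h2] at this
    exact this

lemma eval_qPoly {n : ℕ} (x : Fin (n+1) → ℝ) :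
    MvPolynomial.eval (fun i => (x i : ℂ)) (qPoly n)
      = ((x 0 ^ 2 - ∑ j : Fin n, x j.succ ^ 2 : ℝ) : ℂ) := by
  rw [qPoly, map_sub, map_pow, MvPolynomial.eval_X, map_sum]
  push_cast
  refine congrArg _ ?_
  exact Finset.sum_congr rfl fun j _ => by rw [map_pow, MvPolynomial.eval_X]

lemma reduce_to_embed2 {n : ℕ} (f : (Fin (n+1) → ℝ) → ℂ)
    (hsym : ∀ Λ : Matrix (Fin (n+1)) (Fin (n+1)) ℝ, IsLorentz Λ → ∀ ξ, f (Λ.mulVec ξ) = f ξ)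
    (ξ : Fin (n+1) → ℝ) :
    f ξ = f (embed2 (ξ 0) (Real.sqrt (∑ j : Fin n, ξ j.succ ^ 2))) := by
  set r := Real.sqrt (∑ j : Fin n, ξ j.succ ^ 2) with hr
  have hrnn : 0 ≤ ∑ j : Fin n, ξ j.succ ^ 2 := Finset.sum_nonneg fun j _ => sq_nonneg _
  have hr2 : r ^ 2 = ∑ j : Fin n, ξ j.succ ^ 2 := Real.sq_sqrt hrnn
  set e : Fin (n+1) → ℝ := embed2 (ξ 0) r with he
  have he0 : e 0 = ξ 0 := by simp [he, embed2]
  set w : Fin (n+1) → ℝ := fun i => ξ i - e i with hw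
  have hw0 : w 0 = 0 := by simp [hw, he0]
  by_cases hs : (∑ i, w i * w i) = 0
  · have hwz : ∀ i, w i = 0 := fun i => mul_self_eq_zero.mp
      ((Finset.sum_eq_zero_iff_of_nonneg (fun i _ => mul_self_nonneg (w i))).mp hs i
        (Finset.mem_univ i))
    have hxe : ξ = e := by
      funext i
      have h1 := hwz i
      simp only [hw] at h1
      linarith
    rw [hxe]
  · obtain ⟨Λ, hΛ, hmv⟩ := householder w hw0 hs
    have hn : 0 < n := by
      by_contra hn0
      apply hs
      have hempty : ∀ i : Fin (n+1), w i = 0 := by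
        intro i
        have hi := i.isLt
        have : i = 0 := Fin.ext (by omega)
        rw [this]; exact hw0
      simp [hempty]
    have hesq : ∑ j : Fin n, e j.succ ^ 2 = r ^ 2 := by
      have hee : ∀ j : Fin n, e j.succ = if (j : ℕ) = 0 then r else 0 := by
        intro j
        simp [he, embed2, Fin.val_succ]
      rw [Finset.sum_congr rfl fun j _ => by rw [hee j]]
      have hsq : ∀ j : Fin n, (if (j : ℕ) = 0 then r else 0) ^ 2
          = if j = (⟨0, hn⟩ : Fin n) then r ^ 2 else 0 := by
        intro j
        by_cases h : (j : ℕ) = 0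
        · rw [if_pos h, if_pos (Fin.ext h)]
        · rw [if_neg h, if_neg (fun hh => h (by rw [hh]))]
          ring
      rw [Finset.sum_congr rfl fun j _ => hsq j, Finset.sum_ite_eq' Finset.univ _ _]
      simp
    have hsum1 : ∑ i, (2 * (w i * ξ i) - w i * w i) = ∑ i, (ξ i ^ 2 - e i ^ 2) :=
      Finset.sum_congr rfl fun i _ => by simp only [hw]; ring
    have hsum2 : ∑ i, (ξ i ^ 2 - e i ^ 2) = 0 := by
      rw [Finset.sum_sub_distrib, Fin.sum_univ_succ (fun i => ξ i ^ 2),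
        Fin.sum_univ_succ (fun i => e i ^ 2), he0, hesq, hr2]
      ring
    have hdiff : 2 * (∑ j, w j * ξ j) = ∑ i, w i * w i := by
      have h3 := hsum1.trans hsum2
      rw [Finset.sum_sub_distrib] at h3
      have h4 : ∑ i, 2 * (w i * ξ i) = 2 * ∑ i, w i * ξ i := by rw [Finset.mul_sum]
      rw [h4] at h3
      linarith
    have hκ : (2 / ∑ i, w i * w i) * (∑ j, w j * ξ j) = 1 := by
      rw [div_mul_eq_mul_div, hdiff, div_self hs]
    calc f ξ = f (Λ.mulVec ξ) := (hsym Λ hΛ ξ).symm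
      _ = f e := by
          rw [hmv ξ]
          congr 1
          funext i
          rw [hκ, one_mul]
          simp [hw]


/-- A Lorentz invariant constant-coefficient operator of order `m`
(whose top-order coefficients are not all zero) is a polynomial in the d'Alembertian
of degree `⌊m/2⌋` with nonzero leading coefficient. -/
theorem lorentz_invariant_constant_coeff_is_poly_in_dalembertian (n m : ℕ)
    (c : (Fin (n + 1) → ℕ) → ℂ)
    (htop : ∃ β ∈ mIdx (n + 1) m, (∑ i, β i) = m ∧ c β ≠ 0)
    (hL : LorentzInv m (fun β _ => c β)) :
    ∃ b : ℕ → ℂ, b (m / 2) ≠ 0 ∧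
      ∀ u : (Fin (n + 1) → ℝ) → ℂ, SmoothFn u → ∀ x,
        opApply m (fun β _ => c β) u x
          = ∑ j ∈ Finset.range (m / 2 + 1), b j * dAlem^[j] u x := by
  classical
  obtain ⟨β₀, hβ₀S, hβ₀deg, hβ₀ne⟩ := htop
  have hsym : ∀ Λ : Matrix (Fin (n+1)) (Fin (n+1)) ℝ, IsLorentz Λ →
      ∀ ξ, symb m c (Λ.mulVec ξ) = symb m c ξ := fun Λ h ξ => symb_inv hL h ξ
  set Ps : ℝ → Polynomial ℂ := fun s => ∑ β ∈ mIdx (n+1) m,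
    Polynomial.C (c β * ∏ i ∈ Finset.univ.erase (0 : Fin (n+1)), ((embed2 0 s i : ℝ) : ℂ) ^ (β i))
      * Polynomial.X ^ (β 0) with hPsdef
  have hβ0le : ∀ β ∈ mIdx (n+1) m, β 0 ≤ m := by
    intro β hβ
    rw [mIdx, Finset.mem_filter] at hβ
    exact le_trans (Finset.single_le_sum (fun i _ => Nat.zero_le (β i)) (Finset.mem_univ 0)) hβ.2
  have hPs_eval : ∀ t s : ℝ, (Ps s).eval ((t : ℝ) : ℂ) = symb m c (embed2 t s) := by
    intro t s
    rw [hPsdef, Polynomial.eval_finset_sum, symb]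
    refine Finset.sum_congr rfl fun β _ => ?_
    rw [Polynomial.eval_mul, Polynomial.eval_C, Polynomial.eval_pow, Polynomial.eval_X]
    have hsplit : (∏ i, ((embed2 t s i : ℝ) : ℂ) ^ (β i))
        = ((embed2 t s (0 : Fin (n+1)) : ℝ) : ℂ) ^ (β 0)
          * ∏ i ∈ Finset.univ.erase (0 : Fin (n+1)), ((embed2 t s i : ℝ) : ℂ) ^ (β i) := by
      exact (Finset.mul_prod_erase Finset.univ _ (Finset.mem_univ (0 : Fin (n+1)))).symm
    have h0 : embed2 t s (0 : Fin (n+1)) = t := by simp [embed2]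
    have hrest : ∀ i ∈ Finset.univ.erase (0 : Fin (n+1)), embed2 t s i = embed2 0 s i := by
      intro i hi
      have hine := Finset.ne_of_mem_erase hi
      have hv : (i : ℕ) ≠ 0 := fun h => hine (Fin.ext h)
      simp [embed2, hv]
    rw [hsplit, h0]
    have hprodeq : (∏ i ∈ Finset.univ.erase (0 : Fin (n+1)), ((embed2 t s i : ℝ) : ℂ) ^ (β i))
        = ∏ i ∈ Finset.univ.erase (0 : Fin (n+1)), ((embed2 0 s i : ℝ) : ℂ) ^ (β i) :=
      Finset.prod_congr rfl fun i hi => by rw [hrest i hi]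
    rw [hprodeq]
    ring
  have hPs_coeff : ∀ s : ℝ, ∀ k, m < k → (Ps s).coeff k = 0 := by
    intro s k hk
    rw [hPsdef, Polynomial.finset_sum_coeff]
    refine Finset.sum_eq_zero fun β hβ => ?_
    rw [Polynomial.coeff_C_mul, Polynomial.coeff_X_pow, if_neg (fun h => by
      have := hβ0le β hβ; omega), mul_zero]
  have hPs_deg : ∀ s : ℝ, (Ps s).natDegree < m + 1 := by
    intro s
    have := Polynomial.natDegree_le_iff_coeff_eq_zero.mpr (fun k hk => hPs_coeff s k hk)
    omega
  set b : ℕ → ℂ := fun j => (Ps 0).coeff (2 * j) with hb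
  have hflip : ∀ t s : ℝ, symb m c (embed2 (-t) s) = symb m c (embed2 t s) := by
    intro t s
    have h := hsym (flipT n) (flipT_lorentz n) (embed2 t s)
    rw [flipT_mulVec] at h
    exact h
  have hodd : ∀ k, Odd k → (Ps 0).coeff k = 0 := by
    intro k hk
    rcases lt_or_ge m k with hkm | hkm
    · exact hPs_coeff 0 k hkm
    set rp : Polynomial ℂ := ∑ k' ∈ Finset.range (m+1),
        Polynomial.C ((1 - (-1:ℂ)^k') * (Ps 0).coeff k') * Polynomial.X ^ k' with hrp
    have hrp_eval : ∀ t : ℝ, rp.eval ((t:ℝ):ℂ) = 0 := by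
      intro t
      have h1 : (Ps 0).eval ((t:ℝ):ℂ)
          = ∑ k' ∈ Finset.range (m+1), (Ps 0).coeff k' * ((t:ℝ):ℂ)^k' :=
        Polynomial.eval_eq_sum_range' (hPs_deg 0) _
      have h2 : (Ps 0).eval (((-t:ℝ)):ℂ)
          = ∑ k' ∈ Finset.range (m+1), (Ps 0).coeff k' * (-((t:ℝ):ℂ))^k' := by
        have h := Polynomial.eval_eq_sum_range' (hPs_deg 0) (((-t:ℝ)):ℂ)
        rw [h]
        push_cast
        rfl
      have h3 : (Ps 0).eval (((-t:ℝ)):ℂ) = (Ps 0).eval ((t:ℝ):ℂ) := by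
        rw [hPs_eval, hPs_eval, hflip]
      rw [hrp, Polynomial.eval_finset_sum]
      have hterm : ∀ k' ∈ Finset.range (m+1),
          (Polynomial.C ((1 - (-1:ℂ)^k') * (Ps 0).coeff k') * Polynomial.X ^ k').eval ((t:ℝ):ℂ)
          = (Ps 0).coeff k' * ((t:ℝ):ℂ)^k' - (Ps 0).coeff k' * (-((t:ℝ):ℂ))^k' := by
        intro k' _
        rw [Polynomial.eval_mul, Polynomial.eval_C, Polynomial.eval_pow, Polynomial.eval_X]
        have hp : (-((t:ℝ):ℂ))^k' = (-1:ℂ)^k' * ((t:ℝ):ℂ)^k' := by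
          rw [← neg_one_mul, mul_pow]
        rw [hp]
        ring
      rw [Finset.sum_congr rfl hterm, Finset.sum_sub_distrib, ← h1, ← h2, h3, sub_self]
    have hrp0 : rp = 0 := by
      apply poly_eq_of_eval_real (Set.infinite_univ (α := ℝ))
      intro t _
      rw [hrp_eval t, Polynomial.eval_zero]
    have hcoeff : rp.coeff k = (1 - (-1:ℂ)^k) * (Ps 0).coeff k := by
      rw [hrp, Polynomial.finset_sum_coeff]
      rw [Finset.sum_congr rfl (fun k' _ => by
        rw [Polynomial.coeff_C_mul, Polynomial.coeff_X_pow])]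
      rw [Finset.sum_eq_single k (fun k' _ hne => by rw [if_neg (Ne.symm hne), mul_zero])
        (fun h => absurd (Finset.mem_range.mpr (by omega)) h)]
      rw [if_pos rfl, mul_one]
    rw [hrp0, Polynomial.coeff_zero] at hcoeff
    have hneg : (-1:ℂ)^k = -1 := Odd.neg_one_pow hk
    rw [hneg] at hcoeff
    have h2c : (2:ℂ) * (Ps 0).coeff k = 0 := by linear_combination -hcoeff
    simpa using h2c
  have hp0even : ∀ σ : ℝ, (Ps 0).eval ((σ:ℝ):ℂ)
      = ∑ j ∈ Finset.range (m/2+1), b j * ((σ:ℝ):ℂ)^(2*j) := by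
    intro σ
    rw [Polynomial.eval_eq_sum_range' (hPs_deg 0)]
    rw [← Finset.sum_filter_add_sum_filter_not (Finset.range (m+1)) (fun k => Even k)]
    have hoddpart : ∑ k ∈ (Finset.range (m+1)).filter (fun k => ¬ Even k),
        (Ps 0).coeff k * ((σ:ℝ):ℂ)^k = 0 := by
      refine Finset.sum_eq_zero fun k hk => ?_
      rw [Finset.mem_filter] at hk
      rw [hodd k (Nat.not_even_iff_odd.mp hk.2), zero_mul]
    rw [hoddpart, add_zero]
    have himg : (Finset.range (m+1)).filter (fun k => Even k)
        = (Finset.range (m/2+1)).image (fun j => 2*j) := by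
      ext k
      simp only [Finset.mem_filter, Finset.mem_range, Finset.mem_image]
      constructor
      · rintro ⟨hk, r, hr⟩
        exact ⟨r, by omega, by omega⟩
      · rintro ⟨j, hj, rfl⟩
        exact ⟨by omega, j, by omega⟩
    rw [himg, Finset.sum_image (fun a _ b _ h => by omega)]
  have hbis : ∀ t s : ℝ, (0 < n ∨ s = 0) →
      symb m c (embed2 t s) = ∑ j ∈ Finset.range (m/2+1), b j * (((t^2 - s^2 : ℝ)) : ℂ)^j := by
    rintro t s (hn | rfl)
    · obtain ⟨n', rfl⟩ : ∃ n', n = n' + 1 := ⟨n - 1, by omega⟩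
      have hboost : ∀ σ θ : ℝ, symb m c (embed2 (σ * Real.cosh θ) (σ * Real.sinh θ))
          = symb m c (embed2 σ 0) := by
        intro σ θ
        have h := hsym (bst n' θ) (bst_lorentz n' θ) (embed2 σ 0)
        rw [bst_mulVec] at h
        exact h
      set Qs : Polynomial ℂ := ∑ j ∈ Finset.range (m/2+1),
          Polynomial.C (b j) * (Polynomial.X^2 - Polynomial.C (((s^2 : ℝ)):ℂ))^j with hQsdef
      have hQs_eval : ∀ t' : ℝ, Qs.eval ((t':ℝ):ℂ)
          = ∑ j ∈ Finset.range (m/2+1), b j * (((t'^2 - s^2 : ℝ)):ℂ)^j := by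
        intro t'
        rw [hQsdef, Polynomial.eval_finset_sum]
        refine Finset.sum_congr rfl fun j _ => ?_
        rw [Polynomial.eval_mul, Polynomial.eval_C, Polynomial.eval_pow, Polynomial.eval_sub,
          Polynomial.eval_pow, Polynomial.eval_X, Polynomial.eval_C]
        push_cast
        ring
      have hagree : Ps s = Qs := by
        apply poly_eq_of_eval_real (Set.Ioi_infinite |s|)
        intro t' ht'
        rw [Set.mem_Ioi] at ht'
        have ht0 : 0 < t' := lt_of_le_of_lt (abs_nonneg s) ht'
        have hts : s^2 < t'^2 := by nlinarith [neg_abs_le s, le_abs_self s]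
        set σ := Real.sqrt (t'^2 - s^2) with hσdef
        have hσpos : 0 < σ := Real.sqrt_pos.mpr (by linarith)
        have hσ2 : σ^2 = t'^2 - s^2 := Real.sq_sqrt (by linarith)
        have hsh : Real.sinh (Real.arsinh (s/σ)) = s / σ := Real.sinh_arsinh _
        have hch : Real.cosh (Real.arsinh (s/σ)) = t' / σ := by
          rw [Real.cosh_arsinh]
          have h1 : 1 + (s/σ)^2 = (t'/σ)^2 := by
            field_simp
            linarith
          rw [h1, Real.sqrt_sq (by positivity)]
        have hb1 : σ * Real.cosh (Real.arsinh (s/σ)) = t' := by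
          rw [hch]; field_simp
        have hb2 : σ * Real.sinh (Real.arsinh (s/σ)) = s := by
          rw [hsh]; field_simp
        have hbb := hboost σ (Real.arsinh (s/σ))
        rw [hb1, hb2] at hbb
        calc (Ps s).eval ((t':ℝ):ℂ) = symb m c (embed2 t' s) := hPs_eval t' s
          _ = symb m c (embed2 σ 0) := hbb
          _ = (Ps 0).eval ((σ:ℝ):ℂ) := (hPs_eval σ 0).symm
          _ = ∑ j ∈ Finset.range (m/2+1), b j * ((σ:ℝ):ℂ)^(2*j) := hp0even σ
          _ = Qs.eval ((t':ℝ):ℂ) := by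
              rw [hQs_eval t']
              refine Finset.sum_congr rfl fun j _ => ?_
              rw [pow_mul]
              congr 2
              rw [show ((t'^2 - s^2 : ℝ)) = σ^2 from hσ2.symm]
              push_cast
              ring
      rw [← hPs_eval t s, hagree, hQs_eval t]
    · rw [← hPs_eval t 0, hp0even t]
      refine Finset.sum_congr rfl fun j _ => ?_
      rw [pow_mul]
      congr 1
      push_cast
      ring
  have hfull : ∀ ξ : Fin (n+1) → ℝ, symb m c ξ
      = ∑ j ∈ Finset.range (m/2+1), b j
          * (((ξ 0 ^2 - ∑ j' : Fin n, ξ j'.succ^2 : ℝ)) : ℂ)^j := by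
    intro ξ
    have hred := reduce_to_embed2 (symb m c) hsym ξ
    set r := Real.sqrt (∑ j' : Fin n, ξ j'.succ ^ 2) with hrdef
    have hrnn : 0 ≤ ∑ j' : Fin n, ξ j'.succ ^ 2 := Finset.sum_nonneg fun j _ => sq_nonneg _
    have hr2 : r^2 = ∑ j' : Fin n, ξ j'.succ^2 := Real.sq_sqrt hrnn
    have hcond : 0 < n ∨ r = 0 := by
      rcases Nat.eq_zero_or_pos n with h0 | hpos
      · right
        have hz : (∑ j' : Fin n, ξ j'.succ ^ 2) = 0 := by
          subst h0
          simp
        rw [hrdef, hz, Real.sqrt_zero]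
      · left; exact hpos
    rw [hred, hbis (ξ 0) r hcond, ← hr2]
  set Qpoly : MvPolynomial (Fin (n+1)) ℂ := ∑ j ∈ Finset.range (m/2+1),
      MvPolynomial.C (b j) * qPoly n ^ j with hQpolydef
  have hevalQ : ∀ x : Fin (n+1) → ℝ, MvPolynomial.eval (fun i => (x i : ℂ)) Qpoly
      = ∑ j ∈ Finset.range (m/2+1), b j
          * (((x 0 ^2 - ∑ j' : Fin n, x j'.succ^2 : ℝ)) : ℂ)^j := by
    intro x
    rw [hQpolydef, map_sum]
    refine Finset.sum_congr rfl fun j _ => ?_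
    rw [map_mul, MvPolynomial.eval_C, map_pow, eval_qPoly]
  have hpoly : cP (n+1) m c = Qpoly := by
    apply mv_eval_real_eq
    intro x
    rw [eval_cP, hevalQ, hfull x]
  have hcoeffQ : MvPolynomial.coeff (toF β₀) Qpoly
      = ∑ j ∈ Finset.range (m/2+1), b j * MvPolynomial.coeff (toF β₀) (qPoly n ^ j) := by
    rw [hQpolydef, MvPolynomial.coeff_sum]
    exact Finset.sum_congr rfl fun j _ => by rw [MvPolynomial.coeff_C_mul]
  have hdegβ₀ : (toF β₀).degree = m := by rw [degree_toF, hβ₀deg]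
  have hzero : ∀ j, 2 * j ≠ m → MvPolynomial.coeff (toF β₀) (qPoly n ^ j) = 0 := by
    intro j hj
    exact (qPoly_pow_homog n j).coeff_eq_zero (by rw [hdegβ₀]; omega)
  have hc₀ : c β₀ = MvPolynomial.coeff (toF β₀) Qpoly := by
    rw [← hpoly, coeff_cP c hβ₀S]
  have hm_even : 2 * (m/2) = m := by
    rcases Nat.even_or_odd m with he | ho
    · have := Nat.even_iff.mp he
      omega
    · exfalso
      apply hβ₀ne
      have hom := Nat.odd_iff.mp ho
      rw [hc₀, hcoeffQ]
      refine Finset.sum_eq_zero fun j _ => ?_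
      rw [hzero j (by omega), mul_zero]
  refine ⟨b, ?_, ?_⟩
  · intro hb0
    apply hβ₀ne
    rw [hc₀, hcoeffQ]
    refine Finset.sum_eq_zero fun j hj => ?_
    rcases eq_or_ne j (m/2) with rfl | hne
    · rw [hb0, zero_mul]
    · rw [hzero j (by omega), mul_zero]
  · intro u hu x
    rw [opApply_eq_Dop c u x, hpoly, hQpolydef, Dop_finsetSum]
    refine Finset.sum_congr rfl fun j _ => ?_
    rw [Dop_C_mul, dAlem_iterate hu j]
end
end

section
/- Let ℓ be an even nonnegative integer and let p be a homogeneous polynomial of degree ℓ with complex coefficients in the variables ξ = (τ, ξ⃗) ∈ ℝ×ℝⁿ that is Lorentz invariant, i.e. p(Λξ) = p(ξ) for all Λ ∈ O(1,n) and all ξ. Then there exists b ∈ ℂ such that p(τ, ξ⃗) = b(τ² − |ξ⃗|²)^{ℓ/2} for all (τ, ξ⃗) ∈ ℝ×ℝⁿ. -/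
open scoped BigOperators

noncomputable section

/-- Evaluation of a polynomial with complex coefficients at a real point of `ℝ × ℝⁿ`. -/
def evalR {n : ℕ} (p : MvPolynomial (Fin (n + 1)) ℂ) (ξ : Fin (n + 1) → ℝ) : ℂ :=
  MvPolynomial.eval (fun i => (ξ i : ℂ)) p

/-- A polynomial in `ξ = (τ, ξ⃗) ∈ ℝ × ℝⁿ` is Lorentz invariant if `p(Λξ) = p(ξ)` for all
`Λ ∈ O(1,n)`. -/
def LorentzInvPoly {n : ℕ} (p : MvPolynomial (Fin (n + 1)) ℂ) : Prop :=
  ∀ Λ : Matrix (Fin (n + 1)) (Fin (n + 1)) ℝ, IsLorentz Λ →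
    ∀ ξ : Fin (n + 1) → ℝ, evalR p (Λ.mulVec ξ) = evalR p ξ

/-- The Minkowski quadratic form `τ² - |ξ⃗|²` of `ξ = (τ, ξ⃗)`, as a complex number. -/
def minkForm {n : ℕ} (ξ : Fin (n + 1) → ℝ) : ℂ :=
  (ξ 0 : ℂ) ^ 2 - ∑ j : Fin n, (ξ j.succ : ℂ) ^ 2

-- auxiliary: homogeneous scaling
lemma eval_mul_of_isHomogeneous {σ : Type*} [Fintype σ] {ℓ : ℕ} {p : MvPolynomial σ ℂ}
    (hp : p.IsHomogeneous ℓ) (c : ℂ) (x : σ → ℂ) :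
    MvPolynomial.eval (fun i => c * x i) p = c ^ ℓ * MvPolynomial.eval x p := by
  rw [MvPolynomial.eval_eq, MvPolynomial.eval_eq, Finset.mul_sum]
  refine Finset.sum_congr rfl fun d hd => ?_
  have hdeg : ∑ i ∈ d.support, d i = ℓ := by
    have h1 := hp (MvPolynomial.mem_support_iff.mp hd)
    rw [show (1 : σ → ℕ) = fun _ => 1 from rfl, ← Finsupp.degree_eq_weight_one] at h1
    exact h1
  have : ∏ i ∈ d.support, (c * x i) ^ d i
      = c ^ ℓ * ∏ i ∈ d.support, (x i) ^ d i := by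
    rw [← hdeg]
    rw [Finset.prod_congr rfl (fun i _ => mul_pow (c) (x i) (d i)), Finset.prod_mul_distrib,
      Finset.prod_pow_eq_pow_sum]
  rw [this]; ring

def boost {n : ℕ} (t s : ℝ) (v : Fin n → ℝ) : Matrix (Fin (n+1)) (Fin (n+1)) ℝ :=
  Matrix.of fun i j =>
    Fin.cases
      (Fin.cases (t / s) (fun j' => v j' / s) j)
      (fun i' => Fin.cases (v i' / s)
        (fun j' => (if i' = j' then (1:ℝ) else 0) + v i' * v j' / (s * (t + s))) j) i

lemma boost_entry_sum {n : ℕ} (t s : ℝ) (v : Fin n → ℝ) (hs : s ≠ 0) (hts : t + s ≠ 0)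
    (h : t ^ 2 = s ^ 2 + ∑ j, v j ^ 2) (i j : Fin (n+1)) :
    ∑ k, boost t s v k i * ((if k = 0 then (1:ℝ) else -1) * boost t s v k j)
      = (if i = j then (if i = 0 then (1:ℝ) else -1) else 0) := by
  have hvv : ∑ k, v k * v k = t ^ 2 - s ^ 2 := by
    have : ∑ k, v k * v k = ∑ k, v k ^ 2 := by
      refine Finset.sum_congr rfl fun k _ => by ring
    rw [this, h]; ring
  rw [Fin.sum_univ_succ]
  induction i using Fin.cases with
  | zero =>
    induction j using Fin.cases with
    | zero =>
      simp only [boost, Matrix.of_apply, Fin.cases_zero, Fin.cases_succ, Fin.succ_ne_zero,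
        if_true, if_false, ite_true, ite_false, eq_self_iff_true]
      have expand : ∀ k : Fin n, v k / s * (-1 * (v k / s)) = v k * v k * (-(1 / (s * s))) := by
        intro k; field_simp
      rw [Finset.sum_congr rfl fun k _ => expand k, ← Finset.sum_mul, hvv]
      field_simp
      ring
    | succ j' =>
      simp only [boost, Matrix.of_apply, Fin.cases_zero, Fin.cases_succ, Fin.succ_ne_zero,
        if_true, if_false, ite_true, ite_false, eq_self_iff_true,
        (Fin.succ_ne_zero j').symm, Ne.symm (Fin.succ_ne_zero j')]
      have expand : ∀ k : Fin n,
          v k / s * (-1 * ((if k = j' then (1:ℝ) else 0) + v k * v j' / (s * (t + s))))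
          = (if k = j' then -(v k / s) else 0) + v k * v k * (-(v j' / (s * (s * (t + s))))) := by
        intro k; split_ifs <;> field_simp <;> ring
      rw [Finset.sum_congr rfl fun k _ => expand k, Finset.sum_add_distrib,
        Finset.sum_ite_eq' Finset.univ j', ← Finset.sum_mul, hvv]
      simp only [Finset.mem_univ, if_pos]
      field_simp
      ring
  | succ i' =>
    induction j using Fin.cases with
    | zero =>
      simp only [boost, Matrix.of_apply, Fin.cases_zero, Fin.cases_succ, Fin.succ_ne_zero,
        if_true, if_false, ite_true, ite_false, eq_self_iff_true]
      have expand : ∀ k : Fin n,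
          ((if k = i' then (1:ℝ) else 0) + v k * v i' / (s * (t + s))) * (-1 * (v k / s))
          = (if k = i' then -(v k / s) else 0) + v k * v k * (-(v i' / (s * (s * (t + s))))) := by
        intro k; split_ifs <;> field_simp <;> ring
      rw [Finset.sum_congr rfl fun k _ => expand k, Finset.sum_add_distrib,
        Finset.sum_ite_eq' Finset.univ i', ← Finset.sum_mul, hvv]
      simp only [Finset.mem_univ, if_pos]
      field_simp
      ring
    | succ j' =>
      simp only [boost, Matrix.of_apply, Fin.cases_zero, Fin.cases_succ, Fin.succ_ne_zero,
        if_true, if_false, ite_true, ite_false, eq_self_iff_true]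
      have expand : ∀ k : Fin n,
          ((if k = i' then (1:ℝ) else 0) + v k * v i' / (s * (t + s)))
            * (-1 * ((if k = j' then (1:ℝ) else 0) + v k * v j' / (s * (t + s))))
          = (if k = i' then (-(if k = j' then (1:ℝ) else 0) - v k * v j' / (s * (t+s))) else 0)
            + (if k = j' then (-(v k * v i' / (s * (t+s)))) else 0)
            + v k * v k * (-(v i' * v j' / ((s * (t+s)) * (s * (t+s))))) := by
        intro k; split_ifs <;> field_simp <;> ring
      rw [Finset.sum_congr rfl fun k _ => expand k, Finset.sum_add_distrib,
        Finset.sum_add_distrib, Finset.sum_ite_eq' Finset.univ i',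
        Finset.sum_ite_eq' Finset.univ j', ← Finset.sum_mul, hvv]
      simp only [Finset.mem_univ, if_pos, Fin.succ_inj]
      rcases eq_or_ne i' j' with hij | hij
      · subst hij
        simp only [if_pos rfl, eq_self_iff_true, ↓reduceIte]
        field_simp
        ring
      · rw [if_neg hij, if_neg hij]
        field_simp
        ring

lemma boost_isLorentz {n : ℕ} (t s : ℝ) (v : Fin n → ℝ) (hs : s ≠ 0) (hts : t + s ≠ 0)
    (h : t ^ 2 = s ^ 2 + ∑ j, v j ^ 2) : IsLorentz (boost t s v) := by
  unfold IsLorentz minkMatrix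
  rw [Matrix.mul_assoc]
  ext i j
  rw [Matrix.mul_apply]
  simp only [Matrix.transpose_apply, Matrix.diagonal_mul, Matrix.diagonal_apply]
  exact boost_entry_sum t s v hs hts h i j

lemma boost_mulVec {n : ℕ} (t s : ℝ) (v : Fin n → ℝ) (hs : s ≠ 0) :
    (boost t s v).mulVec (Fin.cons s 0) = Fin.cons t v := by
  funext i
  rw [Matrix.mulVec, dotProduct, Fin.sum_univ_succ]
  simp only [Fin.cons_zero, Fin.cons_succ, Pi.zero_apply, mul_zero, Finset.sum_const_zero,
    add_zero]
  induction i using Fin.cases with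
  | zero =>
    simp [boost, div_mul_cancel₀ _ hs]
  | succ i' =>
    simp [boost, div_mul_cancel₀ _ hs]

/-- A Lorentz invariant homogeneous polynomial of even degree `ℓ` in
`ξ = (τ, ξ⃗) ∈ ℝ × ℝⁿ` equals `b (τ² - |ξ⃗|²)^{ℓ/2}` for some `b ∈ ℂ`. -/
theorem lorentz_invariant_homogeneous_even (n ℓ : ℕ) (hℓ : Even ℓ)
    (p : MvPolynomial (Fin (n + 1)) ℂ) (hp : p.IsHomogeneous ℓ)
    (hinv : LorentzInvPoly p) :
    ∃ b : ℂ, ∀ ξ : Fin (n + 1) → ℝ, evalR p ξ = b * (minkForm ξ) ^ (ℓ / 2) := by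
  obtain ⟨m, hm⟩ := hℓ
  have hℓ2 : ℓ / 2 = m := by omega
  have hℓm : ℓ = 2 * m := by omega
  set b : ℂ := evalR p (Fin.cons 1 0) with hb
  refine ⟨b, fun ξ => ?_⟩
  set v : Fin n → ℝ := Fin.tail ξ with hv
  set r2 : ℝ := ∑ j, v j ^ 2 with hr2
  have hr2nn : 0 ≤ r2 := Finset.sum_nonneg fun j _ => sq_nonneg _
  -- one-variable polynomials
  set F : Polynomial ℂ :=
    MvPolynomial.eval₂ Polynomial.C
      (Fin.cons Polynomial.X fun j => Polynomial.C ((v j : ℂ))) p with hF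
  set G : Polynomial ℂ :=
    Polynomial.C b * (Polynomial.X ^ 2 - Polynomial.C ((r2 : ℂ))) ^ m with hG
  have hGeval : ∀ z : ℂ, G.eval z = b * (z ^ 2 - (r2 : ℂ)) ^ m := by
    intro z; simp [hG]
  have hFeval : ∀ t : ℝ, F.eval ((t : ℝ) : ℂ) = evalR p (Fin.cons t v) := by
    intro t
    have hcomp := MvPolynomial.eval₂_comp_left (Polynomial.evalRingHom ((t : ℝ) : ℂ))
      Polynomial.C (Fin.cons Polynomial.X fun j => Polynomial.C ((v j : ℂ))) p
    have h1 : (Polynomial.evalRingHom ((t : ℝ) : ℂ)).comp Polynomial.C = RingHom.id ℂ := by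
      ext z; simp
    have h2 : (Polynomial.evalRingHom ((t : ℝ) : ℂ)) ∘
        (Fin.cons Polynomial.X fun j => Polynomial.C ((v j : ℂ)))
        = fun i => (((Fin.cons t v : Fin (n+1) → ℝ) i : ℝ) : ℂ) := by
      funext i
      induction i using Fin.cases with
      | zero => simp
      | succ j => simp
    rw [hF]
    calc Polynomial.eval ((t : ℝ) : ℂ) (MvPolynomial.eval₂ Polynomial.C _ p)
        = (Polynomial.evalRingHom ((t : ℝ) : ℂ)) (MvPolynomial.eval₂ Polynomial.C _ p) := rfl
      _ = MvPolynomial.eval₂ ((Polynomial.evalRingHom ((t : ℝ) : ℂ)).comp Polynomial.C)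
            ((Polynomial.evalRingHom ((t : ℝ) : ℂ)) ∘ _) p := hcomp
      _ = evalR p (Fin.cons t v) := by
            rw [h1, h2]
            rfl
  -- homogeneous scaling over reals
  have hsmul : ∀ (s : ℝ) (x : Fin (n+1) → ℝ),
      evalR p (fun i => s * x i) = ((s : ℝ) : ℂ) ^ ℓ * evalR p x := by
    intro s x
    unfold evalR
    have : (fun i => ((s * x i : ℝ) : ℂ)) = fun i => ((s : ℝ) : ℂ) * ((x i : ℝ) : ℂ) := by
      funext i; push_cast; ring
    rw [this, eval_mul_of_isHomogeneous hp]
  -- agreement on an infinite set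
  have key : ∀ t : ℝ, Real.sqrt r2 < t → F.eval ((t : ℝ) : ℂ) = G.eval ((t : ℝ) : ℂ) := by
    intro t ht
    have ht0 : 0 < t := lt_of_le_of_lt (Real.sqrt_nonneg _) ht
    have htr : r2 < t ^ 2 := by
      have h1 : Real.sqrt r2 ^ 2 < t ^ 2 :=
        pow_lt_pow_left₀ ht (Real.sqrt_nonneg _) (by norm_num)
      rwa [Real.sq_sqrt hr2nn] at h1
    set s : ℝ := Real.sqrt (t ^ 2 - r2) with hsdef
    have hs2 : s ^ 2 = t ^ 2 - r2 := Real.sq_sqrt (by linarith)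
    have hs0 : 0 < s := Real.sqrt_pos.mpr (by linarith)
    have hts : 0 < t + s := by linarith
    have hLor := boost_isLorentz t s v (ne_of_gt hs0) (ne_of_gt hts) (by rw [hs2, ← hr2]; ring)
    have hmv := boost_mulVec t s v (ne_of_gt hs0)
    have hinv' := hinv _ hLor (Fin.cons s 0)
    rw [hmv] at hinv'
    rw [hFeval t, hinv']
    have hcons : (Fin.cons s 0 : Fin (n+1) → ℝ)
        = fun i => s * (Fin.cons 1 0 : Fin (n+1) → ℝ) i := by
      funext i
      induction i using Fin.cases with
      | zero => simp
      | succ j => simp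
    rw [hcons, hsmul, ← hb, hGeval]
    have hsc : ((t : ℝ) : ℂ) ^ 2 - ((r2 : ℝ) : ℂ) = ((s : ℝ) : ℂ) ^ 2 := by
      have h3 : ((s ^ 2 : ℝ) : ℂ) = (((t ^ 2 - r2 : ℝ)) : ℂ) := by rw [hs2]
      push_cast at h3
      exact h3.symm
    rw [hsc, ← pow_mul, ← hℓm, mul_comm]
  have hinfinite : {x : ℂ | F.eval x = G.eval x}.Infinite := by
    have himg : ((fun t : ℝ => ((t : ℝ) : ℂ)) '' Set.Ioi (Real.sqrt r2)).Infinite :=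
      (Set.Ioi_infinite _).image (fun a _ c _ h => Complex.ofReal_inj.mp h)
    refine himg.mono ?_
    rintro _ ⟨t, ht, rfl⟩
    exact key t ht
  have hFG : F = G := Polynomial.eq_of_infinite_eval_eq F G hinfinite
  -- conclude
  have hξ : Fin.cons (ξ 0) v = ξ := Fin.cons_self_tail ξ
  have h1 : evalR p ξ = F.eval (((ξ 0 : ℝ)) : ℂ) := by
    rw [hFeval (ξ 0), hξ]
  rw [h1, hFG, hGeval, hℓ2]
  congr 2
  unfold minkForm
  rw [hr2]
  push_cast
  rfl
end
end

section
/- Let p be a polynomial of degree at most m with complex coefficients in the variables ξ = (τ, ξ⃗) ∈ ℝ×ℝⁿ that is Lorentz invariant, i.e. p(Λξ) = p(ξ) for all Λ ∈ O(1,n) and all ξ. Then there exist complex numbers b_0, …, b_{⌊m/2⌋} such that p(τ, ξ⃗) = ∑_{j=0}^{⌊m/2⌋} b_j (τ² − |ξ⃗|²)^j for all (τ, ξ⃗) ∈ ℝ×ℝⁿ; that is, p is a polynomial in the Minkowski form τ² − |ξ⃗|² of degree at most ⌊m/2⌋. -/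
open scoped BigOperators

noncomputable section

lemma eval_aeval' {σ : Type*} [Fintype σ] (p : MvPolynomial σ ℂ) (f : σ → Polynomial ℂ) (t : ℂ) :
    Polynomial.eval t (MvPolynomial.aeval f p) = MvPolynomial.eval (fun i => Polynomial.eval t (f i)) p := by
  have h := DFunLike.congr_fun (MvPolynomial.comp_aeval f (Polynomial.aeval t)) p
  simp only [AlgHom.coe_comp, Function.comp_apply, Polynomial.coe_aeval_eq_eval] at h
  rw [h, MvPolynomial.aeval_def]
  rw [MvPolynomial.eval, MvPolynomial.coe_eval₂Hom, Algebra.algebraMap_self]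

lemma natDegree_aeval_le {σ : Type*} [Fintype σ] (p : MvPolynomial σ ℂ) (f : σ → Polynomial ℂ)
    (hf : ∀ i, (f i).natDegree ≤ 1) :
    (MvPolynomial.aeval f p).natDegree ≤ p.totalDegree := by
  rw [MvPolynomial.aeval_def, MvPolynomial.eval₂_eq]
  apply Polynomial.natDegree_sum_le_of_forall_le
  intro d hd
  calc (algebraMap ℂ (Polynomial ℂ) (MvPolynomial.coeff d p) * ∏ i ∈ d.support, f i ^ d i).natDegree
      ≤ (∏ i ∈ d.support, f i ^ d i).natDegree := Polynomial.natDegree_C_mul_le _ _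
    _ ≤ ∑ i ∈ d.support, (f i ^ d i).natDegree := Polynomial.natDegree_prod_le _ _
    _ ≤ ∑ i ∈ d.support, d i := by
        apply Finset.sum_le_sum
        intro i _
        calc (f i ^ d i).natDegree ≤ d i * (f i).natDegree := Polynomial.natDegree_pow_le
          _ ≤ d i * 1 := Nat.mul_le_mul_left _ (hf i)
          _ = d i := Nat.mul_one _
    _ ≤ p.totalDegree := MvPolynomial.le_totalDegree hd

lemma odd_coeff_zero (q : Polynomial ℂ) (h : ∀ t : ℝ, q.eval (-(t:ℂ)) = q.eval (t:ℂ)) :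
    ∀ k, Odd k → q.coeff k = 0 := by
  set N := q.natDegree + 1 with hN
  set h₂ : Polynomial ℂ :=
    ∑ k ∈ Finset.range N, Polynomial.C (q.coeff k - (-1)^k * q.coeff k) * Polynomial.X ^ k with hh2
  have hzero : h₂ = 0 := by
    apply Polynomial.eq_zero_of_infinite_isRoot
    apply Set.Infinite.mono (s := Set.range (Complex.ofReal))
    · rintro x ⟨t, rfl⟩
      have he : ∀ x : ℂ, h₂.eval x = q.eval x - q.eval (-x) := by
        intro x
        rw [hh2]
        simp only [Polynomial.eval_finset_sum, Polynomial.eval_mul, Polynomial.eval_C,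
          Polynomial.eval_pow, Polynomial.eval_X]
        rw [Polynomial.eval_eq_sum_range (p := q) x, Polynomial.eval_eq_sum_range (p := q) (-x),
          ← Finset.sum_sub_distrib]
        congr 1
        ext k
        ring
      simp only [Set.mem_setOf_eq, Polynomial.IsRoot, he, h t, sub_self]
    · exact Set.infinite_range_of_injective Complex.ofReal_injective
  intro k hk
  rcases lt_or_ge k N with hkN | hkN
  · have := congrArg (fun r => Polynomial.coeff r k) hzero
    simp only [hh2, Polynomial.finset_sum_coeff, Polynomial.coeff_C_mul, Polynomial.coeff_X_pow,
      Polynomial.coeff_zero, mul_ite, mul_one, mul_zero, Finset.sum_ite_eq, Finset.sum_ite_eq'] at this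
    rw [if_pos (Finset.mem_range.2 hkN)] at this
    rw [hk.neg_one_pow] at this
    have h2 : (2 : ℂ) * q.coeff k = 0 := by linear_combination this
    simpa using h2
  · exact Polynomial.coeff_eq_zero_of_natDegree_lt (by omega)

lemma even_poly_eval (q : Polynomial ℂ) (m : ℕ) (hdeg : q.natDegree ≤ m)
    (hodd : ∀ k, Odd k → q.coeff k = 0) (t : ℂ) :
    q.eval t = ∑ j ∈ Finset.range (m/2+1), q.coeff (2*j) * (t^2)^j := by
  have hlt : q.natDegree < 2 * (m/2+1) := by omega
  rw [Polynomial.eval_eq_sum_range' hlt]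
  rw [← Finset.sum_filter_of_ne (p := fun k => Even k)
    (f := fun i => q.coeff i * t ^ i)
    (by
      intro x _ hx
      by_contra hev
      refine hx ?_
      show q.coeff x * t ^ x = 0
      rw [hodd x (Nat.not_even_iff_odd.1 hev)]; ring)]
  refine Finset.sum_nbij' (fun k => k / 2) (fun j => 2 * j) ?_ ?_ ?_ ?_ ?_
  · intro a ha
    simp only [Finset.mem_filter, Finset.mem_range] at ha
    simp only [Finset.mem_range]
    omega
  · intro a ha
    simp only [Finset.mem_range] at ha
    simp only [Finset.mem_filter, Finset.mem_range]
    exact ⟨by omega, even_two_mul a⟩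
  · intro a ha
    simp only [Finset.mem_filter, Finset.mem_range] at ha
    obtain ⟨-, k, hk⟩ := ha
    show 2 * (a / 2) = a
    omega
  · intro a _
    show 2 * a / 2 = a
    omega
  · intro a ha
    simp only [Finset.mem_filter, Finset.mem_range] at ha
    obtain ⟨-, k, hk⟩ := ha
    show q.coeff a * t ^ a = q.coeff (2 * (a / 2)) * (t ^ 2) ^ (a / 2)
    have h2 : 2 * (a / 2) = a := by omega
    rw [← pow_mul, h2]

lemma lorentz_entry {n : ℕ} (Λ : Matrix (Fin (n+1)) (Fin (n+1)) ℝ) (i j : Fin (n+1)) :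
    (Λ.transpose * minkMatrix n * Λ) i j
      = Λ 0 i * Λ 0 j - ∑ k : Fin n, Λ k.succ i * Λ k.succ j := by
  have : (Λ.transpose * minkMatrix n * Λ) i j
      = ∑ k : Fin (n+1), Λ k i * ((if k = 0 then (1:ℝ) else -1) * Λ k j) := by
    rw [Matrix.mul_assoc]
    simp [Matrix.mul_apply, minkMatrix, Matrix.diagonal_apply, Matrix.transpose_apply,
      ite_mul, zero_mul, mul_ite, mul_neg, mul_one, mul_zero, Finset.sum_ite_eq,
      Finset.sum_ite_eq']
  rw [this, Fin.sum_univ_succ]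
  simp [Fin.succ_ne_zero, sub_eq_add_neg, ← Finset.sum_neg_distrib]

def extMat {n : ℕ} (H : Matrix (Fin n) (Fin n) ℝ) : Matrix (Fin (n+1)) (Fin (n+1)) ℝ :=
  Matrix.of fun i j =>
    Fin.cases (Fin.cases 1 (fun _ => 0) j) (fun i' => Fin.cases 0 (fun j' => H i' j') j) i

lemma extMat_apply_zero_zero {n : ℕ} (H : Matrix (Fin n) (Fin n) ℝ) : extMat H 0 0 = 1 := rfl
lemma extMat_apply_zero_succ {n : ℕ} (H : Matrix (Fin n) (Fin n) ℝ) (j : Fin n) :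
    extMat H 0 j.succ = 0 := by simp [extMat]
lemma extMat_apply_succ_zero {n : ℕ} (H : Matrix (Fin n) (Fin n) ℝ) (i : Fin n) :
    extMat H i.succ 0 = 0 := by simp [extMat]
lemma extMat_apply_succ_succ {n : ℕ} (H : Matrix (Fin n) (Fin n) ℝ) (i j : Fin n) :
    extMat H i.succ j.succ = H i j := by simp [extMat]

lemma extMat_lorentz {n : ℕ} (H : Matrix (Fin n) (Fin n) ℝ) (h : H.transpose * H = 1) :
    IsLorentz (extMat H) := by
  unfold IsLorentz
  ext i j
  rw [lorentz_entry]
  have hmm : ∀ i j : Fin (n+1), minkMatrix n i j = if i = j then (if i = 0 then 1 else -1) else 0 := by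
    intro i j
    simp [minkMatrix, Matrix.diagonal_apply]
  induction i using Fin.cases with
  | zero =>
    induction j using Fin.cases with
    | zero => simp [extMat_apply_zero_zero, extMat_apply_succ_zero, hmm]
    | succ j' => simp [extMat_apply_zero_zero, extMat_apply_zero_succ, extMat_apply_succ_zero,
        extMat_apply_succ_succ, hmm, (Fin.succ_ne_zero j').symm]
  | succ i' =>
    induction j using Fin.cases with
    | zero => simp [extMat_apply_zero_zero, extMat_apply_zero_succ, extMat_apply_succ_zero,
        extMat_apply_succ_succ, hmm, Fin.succ_ne_zero i']
    | succ j' =>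
      have h1 : (H.transpose * H) i' j' = (1 : Matrix (Fin n) (Fin n) ℝ) i' j' := by rw [h]
      rw [Matrix.mul_apply] at h1
      simp only [Matrix.transpose_apply] at h1
      simp only [extMat_apply_zero_succ, extMat_apply_succ_succ, hmm, h1, Matrix.one_apply,
        zero_mul, Fin.succ_ne_zero, Fin.succ_inj]
      split <;> simp_all [Matrix.one_apply]

lemma extMat_mulVec {n : ℕ} (H : Matrix (Fin n) (Fin n) ℝ) (ξ : Fin (n+1) → ℝ) :
    (extMat H).mulVec ξ = fun i =>
      Fin.cases (ξ 0) (fun i' => (H.mulVec fun j => ξ j.succ) i') i := by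
  funext i
  induction i using Fin.cases with
  | zero =>
    simp [Matrix.mulVec, dotProduct, Fin.sum_univ_succ, extMat_apply_zero_zero,
      extMat_apply_zero_succ]
  | succ i' =>
    simp [Matrix.mulVec, dotProduct, Fin.sum_univ_succ, extMat_apply_succ_zero,
      extMat_apply_succ_succ]

lemma householder_s10 {d : ℕ} (x y : Fin d → ℝ) (hne : x ≠ y)
    (h : ∑ j, x j ^ 2 = ∑ j, y j ^ 2) :
    ∃ H : Matrix (Fin d) (Fin d) ℝ, H.transpose * H = 1 ∧ H.mulVec x = y := by
  set u : Fin d → ℝ := fun j => x j - y j with hu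
  set S : ℝ := ∑ j, u j ^ 2 with hSdef
  have hS : 0 < S := by
    obtain ⟨j₀, hj₀⟩ : ∃ j₀, u j₀ ≠ 0 := by
      by_contra hc
      push_neg at hc
      exact hne (funext fun j => by have := hc j; simp [hu] at this; linarith)
    have h1 : (0:ℝ) < u j₀ ^ 2 := by positivity
    have h2 : u j₀ ^ 2 ≤ S := by
      apply Finset.single_le_sum (f := fun j => u j ^ 2) (fun i _ => sq_nonneg _)
        (Finset.mem_univ j₀)
    linarith
  have hSne : S ≠ 0 := ne_of_gt hS
  set c : ℝ := 2 / S with hc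
  set H : Matrix (Fin d) (Fin d) ℝ :=
    Matrix.of fun i j => (if i = j then 1 else 0) - c * (u i * u j) with hH
  have hHsymm : H.transpose = H := by
    ext i j
    simp only [Matrix.transpose_apply, hH, Matrix.of_apply]
    have he : (if j = i then (1:ℝ) else 0) = (if i = j then 1 else 0) := by
      simp [eq_comm]
    rw [he]
    ring
  have hHH : H * H = 1 := by
    ext i j
    rw [Matrix.mul_apply]
    have hterm : ∀ k, H i k * H k j =
        ((if i = k then (1:ℝ) else 0) * (if k = j then 1 else 0)
          - (if i = k then 1 else 0) * (c * (u k * u j))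
          - (c * (u i * u k)) * (if k = j then 1 else 0))
          + (c * c * (u i * u j)) * u k ^ 2 := by
      intro k
      simp only [hH, Matrix.of_apply]
      ring
    rw [Finset.sum_congr rfl (fun k _ => hterm k), Finset.sum_add_distrib,
      Finset.sum_sub_distrib, Finset.sum_sub_distrib, ← Finset.mul_sum, ← hSdef]
    simp only [ite_mul, mul_ite, one_mul, zero_mul, mul_one, mul_zero,
      Finset.sum_ite_eq, Finset.sum_ite_eq', Finset.mem_univ, if_true]
    have : c * c * (u i * u j) * S = 2 * (c * (u i * u j)) := by
      have hcS : c * S = 2 := by rw [hc]; exact div_mul_cancel₀ 2 hSne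
      linear_combination (c * (u i * u j)) * hcS
    rw [this, Matrix.one_apply]
    ring
  have hmul : H.mulVec x = y := by
    have hT : 2 * (∑ k, u k * x k) = S := by
      have h2 : ∑ k, (2 * (u k * x k) - u k ^ 2) = 0 := by
        have hk : ∀ k ∈ Finset.univ, 2 * (u k * x k) - u k ^ 2 = x k ^ 2 - y k ^ 2 :=
          fun k _ => by simp only [hu]; ring
        rw [Finset.sum_congr rfl hk, Finset.sum_sub_distrib, h, sub_self]
      rw [Finset.sum_sub_distrib] at h2
      rw [hSdef, Finset.mul_sum]
      linarith [h2]
    funext i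
    rw [Matrix.mulVec, dotProduct]
    have hterm : ∀ k, H i k * x k =
        (if i = k then (1:ℝ) else 0) * x k - (c * u i) * (u k * x k) := by
      intro k; simp only [hH, Matrix.of_apply]; ring
    rw [Finset.sum_congr rfl (fun k _ => hterm k), Finset.sum_sub_distrib, ← Finset.mul_sum]
    simp only [ite_mul, one_mul, zero_mul, Finset.sum_ite_eq, Finset.mem_univ, if_true]
    have : c * u i * ∑ k, u k * x k = u i := by
      have : (∑ k, u k * x k) = S / 2 := by linarith
      rw [this, hc]
      field_simp
    rw [this]
    simp [hu]
  exact ⟨H, by rw [hHsymm, hHH], hmul⟩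

lemma minkMatrix_apply {n : ℕ} (i j : Fin (n+1)) :
    minkMatrix n i j = if i = j then (if i = 0 then 1 else -1) else 0 := by
  simp [minkMatrix, Matrix.diagonal_apply]

def boostMat {n : ℕ} (a b : ℝ) : Matrix (Fin (n+2)) (Fin (n+2)) ℝ :=
  Matrix.of fun i j =>
    Fin.cases (Fin.cases a (fun j' => if j' = 0 then b else 0) j)
      (fun i' => Fin.cases (if i' = 0 then b else 0)
        (fun j' => if i' = 0 ∧ j' = 0 then a else if i' = j' then 1 else 0) j) i

lemma bm_zero_zero {n : ℕ} (a b : ℝ) : boostMat (n := n) a b 0 0 = a := rfl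
lemma bm_zero_succ {n : ℕ} (a b : ℝ) (j' : Fin (n+1)) :
    boostMat (n := n) a b 0 j'.succ = if j' = 0 then b else 0 := by simp [boostMat]
lemma bm_succ_zero {n : ℕ} (a b : ℝ) (i' : Fin (n+1)) :
    boostMat (n := n) a b i'.succ 0 = if i' = 0 then b else 0 := by simp [boostMat]
lemma bm_succ_succ {n : ℕ} (a b : ℝ) (i' j' : Fin (n+1)) :
    boostMat (n := n) a b i'.succ j'.succ
      = if i' = 0 ∧ j' = 0 then a else if i' = j' then 1 else 0 := by simp [boostMat]

lemma boost_lorentz {n : ℕ} (a b : ℝ) (hab : a^2 - b^2 = 1) :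
    IsLorentz (boostMat (n := n) a b) := by
  unfold IsLorentz
  ext i j
  rw [lorentz_entry, Fin.sum_univ_succ]
  induction i using Fin.cases with
  | zero =>
    induction j using Fin.cases with
    | zero =>
      simp only [bm_zero_zero, bm_succ_zero, minkMatrix_apply, if_pos rfl,
        Fin.succ_ne_zero, if_neg (Fin.succ_ne_zero _), ite_mul, mul_ite, mul_zero, zero_mul,
        Finset.sum_const_zero]
      simp
      nlinarith [hab]
    | succ j' =>
      simp only [bm_zero_zero, bm_zero_succ, bm_succ_zero, bm_succ_succ, minkMatrix_apply,
        Fin.succ_ne_zero, Fin.succ_inj]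
      by_cases hj : j' = 0
      · subst hj
        simp [Fin.succ_ne_zero]
        ring
      · simp [hj, Ne.symm hj, Fin.succ_ne_zero, Ne.symm (Fin.succ_ne_zero j')]
  | succ i' =>
    induction j using Fin.cases with
    | zero =>
      simp only [bm_zero_zero, bm_zero_succ, bm_succ_zero, bm_succ_succ, minkMatrix_apply,
        Fin.succ_ne_zero, Fin.succ_inj]
      by_cases hi : i' = 0
      · subst hi
        simp [Fin.succ_ne_zero]
        ring
      · simp [hi, Ne.symm hi, Fin.succ_ne_zero]
    | succ j' =>
      simp only [bm_zero_succ, bm_succ_succ, minkMatrix_apply, Fin.succ_inj,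
        if_neg (Fin.succ_ne_zero _)]
      by_cases hi : i' = 0 <;> by_cases hj : j' = 0
      · subst hi; subst hj
        simp [Fin.succ_ne_zero]
        nlinarith [hab]
      · subst hi
        simp [hj, Ne.symm hj, Fin.succ_ne_zero, Fin.succ_inj]
      · subst hj
        simp [hi, Ne.symm hi, Fin.succ_ne_zero, Fin.succ_inj]
      · simp [hi, hj, Fin.succ_ne_zero, Fin.succ_inj]
        induction i' using Fin.cases with
        | zero => simp_all
        | succ i'' =>
          induction j' using Fin.cases with
          | zero => simp_all
          | succ j'' =>
            simp [Fin.succ_inj, Fin.succ_ne_zero, Finset.sum_ite_eq', mul_ite, ite_mul,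
              Ne.symm (Fin.succ_ne_zero i''), Ne.symm (Fin.succ_ne_zero j'')]
            by_cases h : i'' = j''
            · simp [h]
            · simp [h, Ne.symm h]

def can2 {n : ℕ} (t r : ℝ) : Fin (n+2) → ℝ :=
  fun i => if i = 0 then t else if i = 1 then r else 0

lemma boost_mulVec_can {n : ℕ} (a b σ : ℝ) :
    (boostMat (n := n) a b).mulVec (can2 σ 0) = can2 (a*σ) (b*σ) := by
  funext i
  rw [Matrix.mulVec, dotProduct]
  have hcan : ∀ k : Fin (n+2), can2 (n:=n) σ 0 k = if k = 0 then σ else 0 := by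
    intro k; unfold can2; split <;> simp
  simp only [hcan, mul_ite, mul_zero, Finset.sum_ite_eq', Finset.mem_univ, if_true]
  induction i using Fin.cases with
  | zero => simp [bm_zero_zero, can2]
  | succ i' =>
    rw [bm_succ_zero]
    unfold can2
    by_cases hi : i' = 0
    · subst hi
      simp [Fin.succ_ne_zero, Fin.succ_zero_eq_one]
    · have h1 : i'.succ ≠ 1 := by
        intro h
        apply hi
        apply Fin.succ_injective
        rw [Fin.succ_zero_eq_one]
        exact h
      simp [Fin.succ_ne_zero, hi, h1]

lemma mv_eval_congr {d : ℕ} (p : MvPolynomial (Fin d) ℂ) (f g : Fin d → ℂ)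
    (h : ∀ i, f i = g i) : MvPolynomial.eval f p = MvPolynomial.eval g p := by
  rw [funext h]

/-- A Lorentz invariant polynomial of degree at most `m` in
`ξ = (τ, ξ⃗) ∈ ℝ × ℝⁿ` is a polynomial of degree at most `⌊m/2⌋` in the Minkowski form
`τ² - |ξ⃗|²`. -/
theorem lorentz_invariant_poly (n m : ℕ)
    (p : MvPolynomial (Fin (n + 1)) ℂ) (hdeg : p.totalDegree ≤ m)
    (hinv : LorentzInvPoly p) :
    ∃ b : ℕ → ℂ, ∀ ξ : Fin (n + 1) → ℝ,
      evalR p ξ = ∑ j ∈ Finset.range (m / 2 + 1), b j * (minkForm ξ) ^ j := by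
  classical
  set q : Polynomial ℂ :=
    MvPolynomial.aeval (fun i : Fin (n+1) => if i = 0 then Polynomial.X else 0) p with hq
  have hqeval : ∀ t : ℂ,
      q.eval t = MvPolynomial.eval (fun i : Fin (n+1) => if i = 0 then t else 0) p := by
    intro t
    rw [hq, eval_aeval']
    apply mv_eval_congr
    intro i
    split <;> simp
  have hqdeg : q.natDegree ≤ m := by
    refine le_trans (natDegree_aeval_le p _ ?_) hdeg
    intro i
    split <;> simp
  have hneg : ∀ ξ : Fin (n+1) → ℝ, evalR p (fun i => -(ξ i)) = evalR p ξ := by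
    intro ξ
    have hL : IsLorentz (-1 : Matrix (Fin (n+1)) (Fin (n+1)) ℝ) := by
      unfold IsLorentz
      simp
    have := hinv (-1) hL ξ
    rwa [Matrix.neg_mulVec, Matrix.one_mulVec] at this
  have heven : ∀ t : ℝ, q.eval (-(t:ℂ)) = q.eval (t:ℂ) := by
    intro t
    have h1 := hneg (fun i => if i = 0 then t else 0)
    unfold evalR at h1
    rw [hqeval, hqeval]
    calc MvPolynomial.eval (fun i : Fin (n+1) => if i = 0 then (-(t:ℂ)) else 0) p
        = MvPolynomial.eval
            (fun i : Fin (n+1) => ((-(if i = 0 then t else 0) : ℝ) : ℂ)) p := by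
          apply mv_eval_congr; intro i; split <;> push_cast <;> simp
      _ = MvPolynomial.eval
            (fun i : Fin (n+1) => (((if i = 0 then t else 0) : ℝ) : ℂ)) p := h1
      _ = MvPolynomial.eval (fun i : Fin (n+1) => if i = 0 then ((t:ℝ):ℂ) else 0) p := by
          apply mv_eval_congr; intro i; split <;> push_cast <;> simp
  have hodd := odd_coeff_zero q heven
  set b : ℕ → ℂ := fun j => q.coeff (2*j) with hb
  have hqsum : ∀ t : ℂ, q.eval t = ∑ j ∈ Finset.range (m/2+1), b j * (t^2)^j :=
    even_poly_eval q m hqdeg hodd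
  cases n with
  | zero =>
    refine ⟨b, fun ξ => ?_⟩
    have h1 : evalR p ξ = q.eval ((ξ 0 : ℝ) : ℂ) := by
      rw [hqeval]
      unfold evalR
      apply mv_eval_congr
      intro i
      rw [Fin.eq_zero i]
      simp
    rw [h1, hqsum]
    have hm : minkForm ξ = ((ξ 0 : ℝ) : ℂ)^2 := by
      unfold minkForm
      simp
    rw [hm]
  | succ k =>
    refine ⟨b, fun ξ => ?_⟩
    set w : Fin (k+1) → ℝ := fun j => ξ j.succ with hw
    set r : ℝ := Real.sqrt (∑ j, w j ^ 2) with hrdef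
    have hsum_nonneg : (0:ℝ) ≤ ∑ j, w j ^ 2 := Finset.sum_nonneg fun j _ => sq_nonneg _
    have hr2 : r ^ 2 = ∑ j, w j ^ 2 := Real.sq_sqrt hsum_nonneg
    set y : Fin (k+1) → ℝ := fun j => if j = 0 then r else 0 with hy
    have hyy : ∑ j, y j ^ 2 = r ^ 2 := by
      rw [hy]
      rw [Finset.sum_congr rfl (fun j _ => by
        show (if j = 0 then r else 0)^2 = if j = 0 then r^2 else 0
        split <;> simp)]
      simp
    have hcan_succ : ∀ j : Fin (k+1), can2 (n := k) (ξ 0) r j.succ = y j := by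
      intro j
      unfold can2
      by_cases hj : j = 0
      · subst hj
        simp [Fin.succ_ne_zero, Fin.succ_zero_eq_one, hy]
      · have h1 : j.succ ≠ 1 := by
          intro h
          apply hj
          apply Fin.succ_injective
          rw [Fin.succ_zero_eq_one]
          exact h
        simp [Fin.succ_ne_zero, hj, h1, hy]
    -- Step 1: rotation
    have step1 : evalR p ξ = evalR p (can2 (n := k) (ξ 0) r) := by
      by_cases hwy : w = y
      · congr 1
        funext i
        induction i using Fin.cases with
        | zero => simp [can2]
        | succ j => rw [hcan_succ j, ← hwy]
      · obtain ⟨H, hH1, hHy⟩ := householder_s10 y w (Ne.symm hwy) (by rw [hyy, hr2])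
        have hL := extMat_lorentz H hH1
        have h2 := hinv (extMat H) hL (can2 (n := k) (ξ 0) r)
        have h3 : (extMat H).mulVec (can2 (n := k) (ξ 0) r) = ξ := by
          rw [extMat_mulVec]
          funext i
          induction i using Fin.cases with
          | zero => simp [can2]
          | succ j =>
            simp only [Fin.cases_succ]
            have h4 : (fun j' : Fin (k+1) => can2 (n := k) (ξ 0) r j'.succ) = y := by
              funext j'; exact hcan_succ j'
            rw [h4, hHy]
        conv_lhs => rw [← h3]
        exact h2
    -- Step 2: fixed r, polynomial identity in τ
    have step2 : ∀ τ : ℝ, evalR p (can2 (n := k) τ r)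
        = ∑ j ∈ Finset.range (m/2+1), b j * (((τ:ℂ))^2 - ((r:ℂ))^2)^j := by
      -- evaluation of canonical point
      have hcanpt : ∀ τ : ℝ, evalR p (can2 (n := k) τ r)
          = MvPolynomial.eval
              (fun i : Fin (k+2) => if i = 0 then (τ:ℂ) else if i = 1 then (r:ℂ) else 0) p := by
        intro τ
        unfold evalR
        apply mv_eval_congr
        intro i
        unfold can2
        split
        · simp
        · split <;> simp
      -- boost identity for τ² > r²
      have hboost : ∀ τ : ℝ, r^2 < τ^2 → evalR p (can2 (n := k) τ r)
          = ∑ j ∈ Finset.range (m/2+1), b j * (((τ:ℂ))^2 - ((r:ℂ))^2)^j := by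
        intro τ hτ
        set σ : ℝ := Real.sqrt (τ^2 - r^2) with hσdef
        have hσpos : 0 < σ := Real.sqrt_pos.2 (by linarith)
        have hσ2 : σ^2 = τ^2 - r^2 := Real.sq_sqrt (by linarith)
        have hσne : σ ≠ 0 := ne_of_gt hσpos
        set A : ℝ := τ / σ with hA
        set B : ℝ := r / σ with hB
        have hab : A^2 - B^2 = 1 := by
          rw [hA, hB]
          field_simp
          linarith [hσ2]
        have hL := boost_lorentz (n := k) A B hab
        have h2 := hinv (boostMat (n := k) A B) hL (can2 (n := k) σ 0)
        rw [boost_mulVec_can] at h2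
        have hAσ : A * σ = τ := by rw [hA]; exact div_mul_cancel₀ τ hσne
        have hBσ : B * σ = r := by rw [hB]; exact div_mul_cancel₀ r hσne
        rw [hAσ, hBσ] at h2
        rw [h2]
        have h5 : evalR p (can2 (n := k) σ 0) = q.eval ((σ:ℝ):ℂ) := by
          rw [hqeval]
          unfold evalR
          apply mv_eval_congr
          intro i
          unfold can2
          split
          · simp
          · split <;> simp
        rw [h5, hqsum]
        congr 1
        funext j
        congr 2
        rw [show ((σ:ℝ):ℂ)^2 = (((σ^2 : ℝ)):ℂ) by push_cast; ring, hσ2]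
        push_cast
        ring
      -- the polynomial W
      set fr : Fin (k+2) → Polynomial ℂ := fun i =>
        if i = 0 then Polynomial.X else Polynomial.C (if i = 1 then (r:ℂ) else 0) with hfr
      set Pr : Polynomial ℂ := MvPolynomial.aeval fr p with hPr
      have hPreval : ∀ t : ℂ, Pr.eval t
          = MvPolynomial.eval
              (fun i : Fin (k+2) => if i = 0 then t else if i = 1 then (r:ℂ) else 0) p := by
        intro t
        rw [hPr, eval_aeval']
        apply mv_eval_congr
        intro i
        rw [hfr]
        by_cases h : i = 0
        · simp [h]
        · by_cases h1 : i = 1 <;> simp [h, h1]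
      set W : Polynomial ℂ := Pr - ∑ j ∈ Finset.range (m/2+1),
        Polynomial.C (b j) * (Polynomial.X^2 - Polynomial.C ((r:ℂ)^2))^j with hW
      have hWzero : W = 0 := by
        apply Polynomial.eq_zero_of_infinite_isRoot
        apply Set.Infinite.mono (s := Complex.ofReal '' Set.Ioi |r|)
        · rintro x ⟨τ, hτ, rfl⟩
          have hr2τ : r^2 < τ^2 := by
            have h6 : |r| < τ := hτ
            nlinarith [sq_abs r, abs_nonneg r]
          show W.IsRoot (τ:ℂ)
          unfold Polynomial.IsRoot
          rw [hW]
          simp only [Polynomial.eval_sub, Polynomial.eval_finset_sum, Polynomial.eval_mul,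
            Polynomial.eval_C, Polynomial.eval_pow, Polynomial.eval_X]
          rw [hPreval, ← hcanpt, hboost τ hr2τ]
          simp
        · exact Set.Infinite.image (Complex.ofReal_injective.injOn)
            (Set.Ioi_infinite |r|)
      intro τ
      have h7 := congrArg (Polynomial.eval ((τ:ℝ):ℂ)) hWzero
      rw [hW] at h7
      simp only [Polynomial.eval_sub, Polynomial.eval_finset_sum, Polynomial.eval_mul,
        Polynomial.eval_C, Polynomial.eval_pow, Polynomial.eval_X, Polynomial.eval_zero] at h7
      rw [hPreval, ← hcanpt] at h7
      have h8 := sub_eq_zero.1 h7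
      exact h8
    -- Step 3: conclude
    rw [step1, step2 (ξ 0)]
    congr 1
    funext j
    congr 2
    unfold minkForm
    have h9 : ((r:ℝ):ℂ)^2 = ∑ j : Fin (k+1), ((ξ j.succ : ℝ):ℂ)^2 := by
      rw [show ((r:ℝ):ℂ)^2 = (((r^2 : ℝ)):ℂ) by push_cast; ring, hr2]
      push_cast
      rfl
    rw [h9]
end
end

section
/- Let p be a polynomial of degree at most m with complex coefficients in x ∈ ℝⁿ that is rotation invariant, i.e. p(Rx) = p(x) for all R ∈ O(n) and all x ∈ ℝⁿ. Then there exist complex numbers b_0, …, b_{⌊m/2⌋} such that p(x) = ∑_{k=0}^{⌊m/2⌋} b_k |x|^{2k} for all x ∈ ℝⁿ; that is, p is a polynomial in |x|² of degree at most ⌊m/2⌋. -/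
open scoped BigOperators

noncomputable section

/-- Membership in the orthogonal group `O(n)`:  `ᵗR R = I`. -/
def IsOrth {n : ℕ} (R : Matrix (Fin n) (Fin n) ℝ) : Prop :=
  R.transpose * R = 1

/-- Evaluation of a polynomial with complex coefficients at a real point of `ℝⁿ`. -/
def evalRE {n : ℕ} (p : MvPolynomial (Fin n) ℂ) (x : Fin n → ℝ) : ℂ :=
  MvPolynomial.eval (fun i => (x i : ℂ)) p

/-- A polynomial in `x ∈ ℝⁿ` is rotation invariant if `p(Rx) = p(x)` for all `R ∈ O(n)`. -/
def RotInvPoly {n : ℕ} (p : MvPolynomial (Fin n) ℂ) : Prop :=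
  ∀ R : Matrix (Fin n) (Fin n) ℝ, IsOrth R →
    ∀ x : Fin n → ℝ, evalRE p (R.mulVec x) = evalRE p x

/-- Every linear isometry equivalence of Euclidean space is given by an orthogonal matrix. -/
lemma exists_orth_matrix {n : ℕ} (f : EuclideanSpace ℝ (Fin n) ≃ₗᵢ[ℝ] EuclideanSpace ℝ (Fin n)) :
    ∃ R : Matrix (Fin n) (Fin n) ℝ, IsOrth R ∧
      ∀ v : EuclideanSpace ℝ (Fin n), R.mulVec (WithLp.equiv 2 _ v) = WithLp.equiv 2 _ (f v) := by
  classical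
  set L : (Fin n → ℝ) →ₗ[ℝ] (Fin n → ℝ) :=
    (WithLp.linearEquiv 2 ℝ (Fin n → ℝ)).toLinearMap ∘ₗ f.toLinearEquiv.toLinearMap ∘ₗ
      (WithLp.linearEquiv 2 ℝ (Fin n → ℝ)).symm.toLinearMap with hL
  refine ⟨LinearMap.toMatrix' L, ?_, ?_⟩
  · show (LinearMap.toMatrix' L).transpose * LinearMap.toMatrix' L = 1
    ext i j
    rw [Matrix.mul_apply]
    have key : ∀ k, (LinearMap.toMatrix' L).transpose i k * (LinearMap.toMatrix' L) k j
        = (f (EuclideanSpace.single i 1) : EuclideanSpace ℝ (Fin n)) k *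
          (f (EuclideanSpace.single j 1) : EuclideanSpace ℝ (Fin n)) k := by
      intro k
      rw [Matrix.transpose_apply, LinearMap.toMatrix'_apply, LinearMap.toMatrix'_apply]
      have harg : ∀ a : Fin n, (Pi.single a (1:ℝ) : Fin n → ℝ)
          = (WithLp.equiv 2 (Fin n → ℝ)) (EuclideanSpace.single a 1) := by
        intro a; funext k; simp [EuclideanSpace.single_apply, Pi.single_apply]
      rw [harg i, harg j]
      rfl
    rw [Finset.sum_congr rfl (fun k _ => key k)]
    have h2 : ∑ k, (f (EuclideanSpace.single i 1) : EuclideanSpace ℝ (Fin n)) k *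
          (f (EuclideanSpace.single j 1) : EuclideanSpace ℝ (Fin n)) k
        = inner ℝ (f (EuclideanSpace.single i (1:ℝ))) (f (EuclideanSpace.single j 1)) := by
      rw [PiLp.inner_apply]; simp [RCLike.inner_apply, mul_comm]
    rw [h2, f.inner_map_map, EuclideanSpace.inner_single_left]
    simp [EuclideanSpace.single_apply, Matrix.one_apply, eq_comm]
  · intro v
    have h := Matrix.toLin'_apply (LinearMap.toMatrix' L) (WithLp.equiv 2 _ v)
    rw [Matrix.toLin'_toMatrix'] at h
    simpa [hL] using h.symm

/-- A rotation invariant polynomial of degree at most `m` in `x ∈ ℝⁿ`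
is a polynomial in `|x|²` of degree at most `⌊m/2⌋`. -/
theorem rotation_invariant_poly (n m : ℕ)
    (p : MvPolynomial (Fin n) ℂ) (hdeg : p.totalDegree ≤ m) (hinv : RotInvPoly p) :
    ∃ b : ℕ → ℂ, ∀ x : Fin n → ℝ,
      evalRE p x = ∑ k ∈ Finset.range (m / 2 + 1),
        b k * (∑ i : Fin n, (x i : ℂ) ^ 2) ^ k := by
  classical
  rcases Nat.eq_zero_or_pos n with hn | hn
  · subst hn
    refine ⟨fun k => if k = 0 then evalRE p (fun i => i.elim0) else 0, fun x => ?_⟩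
    have hx : x = fun i => i.elim0 := funext fun i => i.elim0
    have hz : (∑ i : Fin 0, (x i : ℂ) ^ 2) = 0 := by simp
    rw [hx, Finset.sum_eq_single 0 (fun k _ hk => by simp [hk])
      (fun h => absurd (Finset.mem_range.2 (Nat.succ_pos _)) h)]
    simp
  · set i0 : Fin n := ⟨0, hn⟩ with hi0
    -- the one-variable polynomial Q(t) = p(t, 0, ..., 0)
    set Q : Polynomial ℂ :=
      MvPolynomial.aeval (fun i => if i = i0 then (Polynomial.X : Polynomial ℂ) else 0) p with hQ
    have hQeval : ∀ c : ℂ, Q.eval c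
        = MvPolynomial.eval (fun i => if i = i0 then c else 0) p := by
      intro c
      rw [hQ, MvPolynomial.aeval_def]
      have h1 : Polynomial.eval c (MvPolynomial.eval₂ (algebraMap ℂ (Polynomial ℂ))
            (fun i => if i = i0 then (Polynomial.X : Polynomial ℂ) else 0) p)
          = MvPolynomial.eval₂ ((Polynomial.evalRingHom c).comp (algebraMap ℂ (Polynomial ℂ)))
            (fun i => Polynomial.eval c (if i = i0 then (Polynomial.X : Polynomial ℂ) else 0)) p :=
        MvPolynomial.eval₂_comp_left (Polynomial.evalRingHom c) _ _ p
      rw [show Polynomial.eval c (MvPolynomial.eval₂ (algebraMap ℂ (Polynomial ℂ)) _ p)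
          = _ from h1]
      have h2 : (Polynomial.evalRingHom c).comp (algebraMap ℂ (Polynomial ℂ)) = RingHom.id ℂ := by
        ext a; simp
      have h3 : (fun i => Polynomial.eval c (if i = i0 then (Polynomial.X : Polynomial ℂ) else 0))
          = fun i => if i = i0 then c else 0 := by
        funext i; split_ifs <;> simp
      rw [h2, h3, MvPolynomial.eval₂_id]
    have hQre : ∀ t : ℝ, Q.eval (t : ℂ)
        = evalRE p (fun i => if i = i0 then t else 0) := by
      intro t
      have harg : (fun i => (((if i = i0 then t else 0 : ℝ)) : ℂ))
          = (fun i => if i = i0 then (t : ℂ) else 0) := by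
        funext i; by_cases h : i = i0 <;> simp [h]
      rw [hQeval]
      exact (congrArg (fun g : Fin n → ℂ => MvPolynomial.eval g p) harg).symm
    have hdegQ : Q.natDegree ≤ m := by
      have := MvPolynomial.aeval_natDegree_le (n := 1) p hdeg
        (fun i => if i = i0 then (Polynomial.X : Polynomial ℂ) else 0)
        (fun i => by by_cases h : i = i0 <;> simp [h])
      simpa using this
    -- evenness of Q via the reflection matrix
    have heven : ∀ t : ℝ, Q.eval (-(t : ℂ)) = Q.eval (t : ℂ) := by
      intro t
      set D : Matrix (Fin n) (Fin n) ℝ :=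
        Matrix.diagonal (fun i => if i = i0 then (-1 : ℝ) else 1) with hD
      have hDorth : IsOrth D := by
        show D.transpose * D = 1
        rw [hD, Matrix.diagonal_transpose, Matrix.diagonal_mul_diagonal]
        have hfun : (fun i : Fin n => (if i = i0 then (-1:ℝ) else 1) * if i = i0 then (-1:ℝ) else 1)
            = fun _ => (1:ℝ) := by
          funext i; by_cases h : i = i0 <;> simp [h]
        rw [hfun, Matrix.diagonal_one]
      have hmv : D.mulVec (fun i => if i = i0 then t else 0)
          = fun i => if i = i0 then -t else 0 := by
        funext i
        rw [hD, Matrix.mulVec_diagonal]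
        by_cases h : i = i0 <;> simp [h]
      have := hinv D hDorth (fun i => if i = i0 then t else 0)
      rw [hmv] at this
      have h1 := hQre t
      have h2 := hQre (-t)
      rw [show ((-t : ℝ) : ℂ) = -(t : ℂ) by push_cast; ring] at h2
      rw [h1, h2]; exact this
    -- rotation invariance: p(x) = Q(|x|)
    have hrot : ∀ x : Fin n → ℝ,
        evalRE p x = Q.eval ((Real.sqrt (∑ i, x i ^ 2) : ℝ) : ℂ) := by
      intro x
      set s : ℝ := Real.sqrt (∑ i, x i ^ 2) with hs
      set e : EuclideanSpace ℝ (Fin n) := EuclideanSpace.single i0 s with he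
      set xE : EuclideanSpace ℝ (Fin n) := (WithLp.equiv 2 (Fin n → ℝ)).symm x with hxE
      have hnormx : ‖xE‖ = s := by
        rw [EuclideanSpace.norm_eq, hs]
        congr 1
        refine Finset.sum_congr rfl fun i _ => ?_
        rw [Real.norm_eq_abs, sq_abs]
        rfl
      have hnorm : ‖e‖ = ‖xE‖ := by
        rw [hnormx, he, EuclideanSpace.norm_single, Real.norm_eq_abs, abs_of_nonneg]
        exact Real.sqrt_nonneg _
      obtain ⟨R, hRorth, hRmv⟩ := exists_orth_matrix
        (Submodule.reflection (Submodule.span ℝ {e - xE})ᗮ)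
      have hfe : Submodule.reflection (Submodule.span ℝ {e - xE})ᗮ e = xE := Submodule.reflection_sub hnorm
      have hve : (WithLp.equiv 2 (Fin n → ℝ)) e = fun i => if i = i0 then s else 0 := by
        funext i; simp [he, EuclideanSpace.single_apply]
      have hmvx : R.mulVec (fun i => if i = i0 then s else 0) = x := by
        rw [← hve, hRmv, hfe, hxE]
        exact (WithLp.equiv 2 (Fin n → ℝ)).apply_symm_apply x
      have := hinv R hRorth (fun i => if i = i0 then s else 0)
      rw [hmvx] at this
      rw [this, hQre]
    -- the coefficients
    refine ⟨fun k => Q.coeff (2 * k), fun x => ?_⟩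
    set s : ℝ := Real.sqrt (∑ i, x i ^ 2) with hs
    set c : ℂ := (s : ℂ) with hc
    have hc2 : c ^ 2 = ∑ i : Fin n, (x i : ℂ) ^ 2 := by
      have hs2 : s ^ 2 = ∑ i, x i ^ 2 :=
        Real.sq_sqrt (Finset.sum_nonneg fun i _ => sq_nonneg _)
      calc c ^ 2 = ((s ^ 2 : ℝ) : ℂ) := by rw [hc]; push_cast; ring
        _ = ((∑ i, x i ^ 2 : ℝ) : ℂ) := by rw [hs2]
        _ = ∑ i : Fin n, (x i : ℂ) ^ 2 := by push_cast; rfl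
    have hsum : ∀ d : ℂ, Q.eval d = ∑ j ∈ Finset.range (m + 1), Q.coeff j * d ^ j := fun d =>
      Polynomial.eval_eq_sum_range' (lt_of_le_of_lt hdegQ (Nat.lt_succ_self m)) d
    have hQc : Q.eval (-c) = Q.eval c := heven s
    have key : Q.eval c = ∑ j ∈ Finset.range (m + 1),
        (if Even j then Q.coeff j * c ^ j else 0) := by
      have h3 : ∀ j ∈ Finset.range (m + 1),
          Q.coeff j * c ^ j + Q.coeff j * (-c) ^ j
            = 2 * (if Even j then Q.coeff j * c ^ j else 0) := by
        intro j _
        rcases Nat.even_or_odd j with hj | hj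
        · rw [hj.neg_pow, if_pos hj]; ring
        · rw [hj.neg_pow, if_neg (Nat.not_even_iff_odd.mpr hj)]; ring
      have h4 : Q.eval c + Q.eval (-c)
          = 2 * ∑ j ∈ Finset.range (m + 1), (if Even j then Q.coeff j * c ^ j else 0) := by
        rw [hsum c, hsum (-c), ← Finset.sum_add_distrib, Finset.sum_congr rfl h3,
          ← Finset.mul_sum]
      have h2 : (2 : ℂ) * Q.eval c
          = 2 * ∑ j ∈ Finset.range (m + 1), (if Even j then Q.coeff j * c ^ j else 0) := by
        rw [← h4, hQc]; ring
      exact mul_left_cancel₀ two_ne_zero h2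
    have hfilter : Finset.filter (fun j => Even j) (Finset.range (m + 1))
        = (Finset.range (m / 2 + 1)).image (fun k => 2 * k) := by
      ext j
      simp only [Finset.mem_filter, Finset.mem_range, Finset.mem_image, Nat.even_iff]
      constructor
      · rintro ⟨hj, hje⟩
        exact ⟨j / 2, by omega, by omega⟩
      · rintro ⟨k, hk, rfl⟩
        constructor <;> omega
    rw [hrot x, key, ← Finset.sum_filter, hfilter,
      Finset.sum_image (fun a _ b _ h => by omega)]
    refine Finset.sum_congr rfl fun k _ => ?_
    rw [← hc2, pow_mul]
end
end
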